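/- arXiv:0909.0283 — 7 statements merged into one kernel-verified Lean document; each statement's English description precedes it below -/
import Mathlib

section
/- Fix a positive integer k and let λ, μ, ν ∈ [0,k] be real numbers. The set T_{λ,μ}^ν is nonempty if and only if |λ−μ| ≤ ν ≤ min(λ+μ, 2k−λ−μ). -/
/-!
An element of `SU(2)` is determined up to conjugacy by its trace: if its trace is `e + conj e`
with `|e| = 1`, then `e` is a root of its characteristic polynomial, and a unit eigenvector
`(a, b)` for `e` is the first column of a matrix `[[a, -conj b], [b, conj a]] ∈ SU(2)`
conjugating it to `diag(e, conj e)`.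
Hence `T_{λ,μ}^ν` is nonempty iff `tr (t_λ w t_μ w⁻¹) = tr t_ν` for some `w ∈ SU(2)`. For
`w = [[a, -conj b], [b, conj a]]` this trace is `2 (|a|² cos (A + B) + |b|² cos (A - B))` with
`A = πλ/k`, `B = πμ/k`, and `(|a|², |b|²)` ranges over all convex weights, so the condition is
`cos (πν/k) ∈ [cos (A + B), cos (A - B)]`. Since `cos` is decreasing on `[0, π]` and
`cos (A + B) = cos (2π - A - B)`, this is `|A - B| ≤ πν/k ≤ min (A + B) (2π - A - B)`.
-/

open Matrix Complex Real

noncomputable section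

/-- `SU(2)`: 2×2 complex unitary matrices with determinant 1. -/
def SU2 : Set (Matrix (Fin 2) (Fin 2) ℂ) :=
  {g | g ∈ Matrix.unitaryGroup (Fin 2) ℂ ∧ g.det = 1}

/-- The diagonal matrix `t_λ = diag(exp(iπλ/k), exp(−iπλ/k))`. -/
def tmat (k : ℕ) (l : ℝ) : Matrix (Fin 2) (Fin 2) ℂ :=
  Matrix.diagonal ![Complex.exp (Complex.I * ((Real.pi * l / k : ℝ) : ℂ)),
    Complex.exp (-(Complex.I * ((Real.pi * l / k : ℝ) : ℂ)))]

/-- The conjugacy class `C_λ` of `t_λ` in `SU(2)`. -/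
def conjClass (k : ℕ) (l : ℝ) : Set (Matrix (Fin 2) (Fin 2) ℂ) :=
  {g | ∃ x ∈ SU2, g = x * tmat k l * x⁻¹}

/-- `T_{λ,μ}^ν = {(g,h) : g ∈ C_λ, h ∈ C_μ, g·h ∈ C_ν}`. -/
def Tset (k : ℕ) (l m n : ℝ) :
    Set (Matrix (Fin 2) (Fin 2) ℂ × Matrix (Fin 2) (Fin 2) ℂ) :=
  {p | p.1 ∈ conjClass k l ∧ p.2 ∈ conjClass k m ∧ p.1 * p.2 ∈ conjClass k n}


open ComplexConjugate

lemma of_fin_two_inj {α : Type*} {a b c d a' b' c' d' : α} :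
    !![a, b; c, d] = !![a', b'; c', d'] ↔ a = a' ∧ b = b' ∧ c = c' ∧ d = d' := by
  simp [and_assoc]

lemma star_fin_two_of (a b c d : ℂ) :
    star !![a, b; c, d] = !![conj a, conj c; conj b, conj d] := by
  rw [star_eq_conjTranspose, ← Matrix.ext_iff]
  simp [Fin.forall_fin_two]

lemma det_sub_smul_one_fin_two {R : Type*} [CommRing R] (M : Matrix (Fin 2) (Fin 2) R) (e : R) :
    (M - e • 1).det = e ^ 2 - M.trace * e + M.det := by
  rw [det_fin_two, det_fin_two, trace_fin_two]
  simp only [Matrix.sub_apply, Matrix.smul_apply, smul_eq_mul, one_apply_eq,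
    one_apply_ne zero_ne_one, one_apply_ne one_ne_zero]
  ring

def su2Matrix (a b : ℂ) : Matrix (Fin 2) (Fin 2) ℂ := !![a, -conj b; b, conj a]

lemma star_su2Matrix (a b : ℂ) : star (su2Matrix a b) = su2Matrix (conj a) (-b) := by
  rw [su2Matrix, su2Matrix, star_fin_two_of]
  simp only [conj_conj, map_neg, neg_neg]

lemma su2Matrix_mem_SU2 {a b : ℂ} (hab : normSq a + normSq b = 1) : su2Matrix a b ∈ SU2 := by
  have hab' : a * conj a + b * conj b = 1 := by
    rw [mul_conj, mul_conj]; exact_mod_cast hab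
  refine ⟨mem_unitaryGroup_iff.2 ?_, ?_⟩
  · rw [star_su2Matrix, su2Matrix, su2Matrix, mul_fin_two, one_fin_two, of_fin_two_inj, conj_conj,
      map_neg, neg_neg]
    exact ⟨by linear_combination hab', by ring, by ring, by linear_combination hab'⟩
  · rw [su2Matrix, det_fin_two_of]
    linear_combination hab'

lemma mem_SU2_iff {g : Matrix (Fin 2) (Fin 2) ℂ} :
    g ∈ SU2 ↔ ∃ a b : ℂ, normSq a + normSq b = 1 ∧ g = su2Matrix a b := by
  refine ⟨fun ⟨hu, hdet⟩ => ?_, fun ⟨a, b, hab, hg⟩ => hg ▸ su2Matrix_mem_SU2 hab⟩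
  -- for determinant one, the inverse `star g` is the adjugate
  have hstar : star g = g.adjugate := by
    have hadj : g * g.adjugate = 1 := by rw [mul_adjugate, hdet, one_smul]
    rw [← inv_eq_right_inv (mem_unitaryGroup_iff.1 hu), ← inv_eq_right_inv hadj]
  rw [eta_fin_two g, star_fin_two_of, adjugate_fin_two_of, of_fin_two_inj] at hstar
  obtain ⟨h11, h01, -, -⟩ := hstar
  have hg : g = su2Matrix (g 0 0) (g 1 0) := by
    rw [su2Matrix, h11, h01, neg_neg]
    exact eta_fin_two g
  refine ⟨g 0 0, g 1 0, ?_, hg⟩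
  have hd := hdet
  rw [hg, su2Matrix, det_fin_two_of, mul_conj, neg_mul, sub_neg_eq_add, mul_comm, mul_conj] at hd
  exact_mod_cast hd

lemma SU2.inv_eq_star {g : Matrix (Fin 2) (Fin 2) ℂ} (hg : g ∈ SU2) : g⁻¹ = star g :=
  inv_eq_right_inv (mem_unitaryGroup_iff.1 hg.1)

lemma SU2.mul_inv_cancel {g : Matrix (Fin 2) (Fin 2) ℂ} (hg : g ∈ SU2) : g * g⁻¹ = 1 :=
  mul_nonsing_inv g (by rw [hg.2]; exact isUnit_one)

lemma SU2.inv_mul_cancel {g : Matrix (Fin 2) (Fin 2) ℂ} (hg : g ∈ SU2) : g⁻¹ * g = 1 :=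
  nonsing_inv_mul g (by rw [hg.2]; exact isUnit_one)

lemma SU2.one_mem : (1 : Matrix (Fin 2) (Fin 2) ℂ) ∈ SU2 :=
  ⟨Submonoid.one_mem _, det_one⟩

lemma SU2.mul_mem {g h : Matrix (Fin 2) (Fin 2) ℂ} (hg : g ∈ SU2) (hh : h ∈ SU2) :
    g * h ∈ SU2 :=
  ⟨Submonoid.mul_mem _ hg.1 hh.1, by rw [det_mul, hg.2, hh.2, one_mul]⟩

lemma SU2.inv_mem {g : Matrix (Fin 2) (Fin 2) ℂ} (hg : g ∈ SU2) : g⁻¹ ∈ SU2 := by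
  rw [SU2.inv_eq_star hg]
  refine ⟨Unitary.star_mem hg.1, ?_⟩
  rw [star_eq_conjTranspose, det_conjTranspose, hg.2, star_one]

lemma SU2.trace_conj {x : Matrix (Fin 2) (Fin 2) ℂ} (hx : x ∈ SU2)
    (M : Matrix (Fin 2) (Fin 2) ℂ) :
    (x * M * x⁻¹).trace = M.trace := by
  rw [trace_mul_comm, ← mul_assoc, SU2.inv_mul_cancel hx, one_mul]

/- Conjugating the eigenvector equations for `(a, b)` shows that `(-conj b, conj a)` is an
eigenvector for `conj e`. -/
lemma su2Matrix_mul_eq_mul_diagonal {α γ a b e : ℂ}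
    (hv : su2Matrix α γ *ᵥ ![a, b] = e • ![a, b]) :
    su2Matrix α γ * su2Matrix a b = su2Matrix a b * diagonal ![e, conj e] := by
  simp only [su2Matrix, cons_mulVec, vec2_dotProduct', empty_mulVec, smul_cons, smul_empty,
    smul_eq_mul, vecCons_inj, and_true] at hv
  obtain ⟨h0, h1⟩ := hv
  have h0' := congrArg conj h0
  have h1' := congrArg conj h1
  simp only [map_add, map_mul, map_neg, conj_conj] at h0' h1'
  rw [su2Matrix, su2Matrix, diagonal_vec2, mul_fin_two, mul_fin_two, of_fin_two_inj]
  exact ⟨by linear_combination h0, by linear_combination -h1', by linear_combination h1,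
    by linear_combination h0'⟩

lemma exists_unit_eigenvector {M : Matrix (Fin 2) (Fin 2) ℂ} {e : ℂ}
    (h : (M - e • 1).det = 0) :
    ∃ a b : ℂ, normSq a + normSq b = 1 ∧ M *ᵥ ![a, b] = e • ![a, b] := by
  obtain ⟨v, hv0, hv⟩ := exists_mulVec_eq_zero_iff.2 h
  rw [sub_mulVec, smul_mulVec, one_mulVec, sub_eq_zero] at hv
  set r := normSq (v 0) + normSq (v 1)
  have hr : 0 < r := by
    by_contra! hr
    refine hv0 (funext fun i => ?_)
    fin_cases i <;> simp only [Fin.zero_eta, Fin.mk_one, Pi.zero_apply, ← normSq_eq_zero] <;>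
      linarith [normSq_nonneg (v 0), normSq_nonneg (v 1)]
  set c : ℂ := (((√r)⁻¹ : ℝ) : ℂ)
  have hcv : ![c * v 0, c * v 1] = c • v := by
    ext i; fin_cases i <;> simp
  refine ⟨c * v 0, c * v 1, ?_, ?_⟩
  · rw [normSq_mul, normSq_mul, ← mul_add, normSq_ofReal, ← mul_inv, Real.mul_self_sqrt hr.le]
    exact inv_mul_cancel₀ hr.ne'
  · rw [hcv, mulVec_smul, hv, smul_comm]

lemma exists_SU2_mul_eq_mul_diagonal {M : Matrix (Fin 2) (Fin 2) ℂ} (hM : M ∈ SU2) {e : ℂ}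
    (he : normSq e = 1) (htr : M.trace = e + conj e) :
    ∃ z ∈ SU2, M * z = z * diagonal ![e, conj e] := by
  have hdet : (M - e • 1).det = 0 := by
    rw [det_sub_smul_one_fin_two, htr, hM.2]
    linear_combination -(mul_conj e).trans (by rw [he, ofReal_one])
  obtain ⟨a, b, hab, hv⟩ := exists_unit_eigenvector hdet
  obtain ⟨α, γ, -, rfl⟩ := mem_SU2_iff.1 hM
  exact ⟨su2Matrix a b, su2Matrix_mem_SU2 hab, su2Matrix_mul_eq_mul_diagonal hv⟩

lemma conj_exp_I_mul (x : ℝ) : conj (cexp (I * x)) = cexp (-(I * x)) := by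
  rw [← exp_conj, map_mul, conj_I, conj_ofReal, neg_mul]

lemma normSq_exp_I_mul (x : ℝ) : normSq (cexp (I * x)) = 1 := by
  rw [normSq_eq_norm_sq, mul_comm, norm_exp_ofReal_mul_I, one_pow]

lemma tmat_eq_diagonal (k : ℕ) (l : ℝ) :
    tmat k l = diagonal ![cexp (I * (π * l / k : ℝ)), conj (cexp (I * (π * l / k : ℝ)))] := by
  rw [conj_exp_I_mul, tmat]

lemma diagonal_mem_SU2 {e : ℂ} (he : normSq e = 1) : diagonal ![e, conj e] ∈ SU2 := by
  convert su2Matrix_mem_SU2 (a := e) (b := 0) (by rw [he, normSq_zero, add_zero])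
  ext i j; fin_cases i <;> fin_cases j <;> simp [su2Matrix]

lemma tmat_mem_SU2 (k : ℕ) (l : ℝ) : tmat k l ∈ SU2 := by
  rw [tmat_eq_diagonal]
  exact diagonal_mem_SU2 (normSq_exp_I_mul _)

lemma mem_conjClass_iff {k : ℕ} {l : ℝ} {g : Matrix (Fin 2) (Fin 2) ℂ} :
    g ∈ conjClass k l ↔ g ∈ SU2 ∧ g.trace = (tmat k l).trace := by
  constructor
  · rintro ⟨x, hx, rfl⟩
    exact ⟨SU2.mul_mem (SU2.mul_mem hx (tmat_mem_SU2 k l)) (SU2.inv_mem hx),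
      SU2.trace_conj hx _⟩
  · rintro ⟨hg, htr⟩
    rw [tmat_eq_diagonal, trace_diagonal, Fin.sum_univ_two] at htr
    obtain ⟨z, hz, hgz⟩ := exists_SU2_mul_eq_mul_diagonal hg (normSq_exp_I_mul _) htr
    refine ⟨z, hz, ?_⟩
    rw [tmat_eq_diagonal, ← hgz, mul_assoc, SU2.mul_inv_cancel hz, mul_one]

lemma Tset_nonempty_iff {k : ℕ} {l m n : ℝ} :
    (Tset k l m n).Nonempty ↔
      ∃ w ∈ SU2, (tmat k l * (w * tmat k m * w⁻¹)).trace = (tmat k n).trace := by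
  constructor
  · rintro ⟨⟨g, h⟩, ⟨x, hx, rfl⟩, ⟨y, hy, rfl⟩, hgh⟩
    refine ⟨x⁻¹ * y, SU2.mul_mem (SU2.inv_mem hx) hy, ?_⟩
    have hinv : (x⁻¹ * y)⁻¹ = y⁻¹ * x := by
      rw [Matrix.mul_inv_rev, nonsing_inv_nonsing_inv _ (by rw [hx.2]; exact isUnit_one)]
    rw [← (mem_conjClass_iff.1 hgh).2, hinv, ← SU2.trace_conj hx]
    simp only [mul_assoc, SU2.mul_inv_cancel hx, mul_one]
  · rintro ⟨w, hw, htr⟩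
    refine ⟨(tmat k l, w * tmat k m * w⁻¹), ⟨1, SU2.one_mem, ?_⟩, ⟨w, hw, rfl⟩,
      mem_conjClass_iff.2 ⟨?_, htr⟩⟩
    · rw [inv_one, mul_one, one_mul]
    · exact SU2.mul_mem (tmat_mem_SU2 k l)
        (SU2.mul_mem (SU2.mul_mem hw (tmat_mem_SU2 k m)) (SU2.inv_mem hw))

lemma trace_diagonal_mul_conj_su2Matrix (p q a b : ℂ) :
    (diagonal ![p, conj p] * (su2Matrix a b * diagonal ![q, conj q] * star (su2Matrix a b))).trace
      = (normSq a * (2 * (p * q).re) + normSq b * (2 * (p * conj q).re) : ℝ) := by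
  rw [ofReal_add, ofReal_mul, ofReal_mul (normSq b), ← add_conj, ← add_conj, ← mul_conj,
    ← mul_conj, star_su2Matrix]
  simp only [su2Matrix, diagonal_fin_two, mul_fin_two, trace_fin_two_of, conj_conj,
    map_neg, cons_val_zero, cons_val_one, map_mul]
  ring

lemma exists_SU2_trace_eq_iff (p q r : ℂ) :
    (∃ w ∈ SU2,
        (diagonal ![p, conj p] * (w * diagonal ![q, conj q] * w⁻¹)).trace = r + conj r) ↔
      r.re ∈ segment ℝ (p * q).re (p * conj q).re := by
  constructor
  · rintro ⟨w, hw, htr⟩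
    obtain ⟨a, b, hab, rfl⟩ := mem_SU2_iff.1 hw
    rw [SU2.inv_eq_star hw, trace_diagonal_mul_conj_su2Matrix, add_conj, ofReal_inj] at htr
    exact ⟨normSq a, normSq b, normSq_nonneg a, normSq_nonneg b, hab, by
      simp only [smul_eq_mul]; linarith⟩
  · rintro ⟨s, t, hs, ht, hst, hr⟩
    have hs' : normSq (√s : ℂ) = s := by rw [normSq_ofReal, Real.mul_self_sqrt hs]
    have ht' : normSq (√t : ℂ) = t := by rw [normSq_ofReal, Real.mul_self_sqrt ht]
    have hw := su2Matrix_mem_SU2 (a := √s) (b := √t) (by rw [hs', ht', hst])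
    refine ⟨_, hw, ?_⟩
    rw [SU2.inv_eq_star hw, trace_diagonal_mul_conj_su2Matrix, add_conj, ofReal_inj, hs', ht',
      ← hr, smul_eq_mul, smul_eq_mul]
    ring

lemma re_exp_I_mul (x : ℝ) : (cexp (I * x)).re = Real.cos x := by
  rw [mul_comm, exp_ofReal_mul_I_re]

lemma exp_I_mul_mul_exp_I_mul (x y : ℝ) :
    cexp (I * x) * cexp (I * y) = cexp (I * (x + y : ℝ)) := by
  rw [← Complex.exp_add]; push_cast; ring_nf

lemma exp_I_mul_mul_conj_exp_I_mul (x y : ℝ) :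
    cexp (I * x) * conj (cexp (I * y)) = cexp (I * (x - y : ℝ)) := by
  rw [conj_exp_I_mul, ← Complex.exp_add]; push_cast; ring_nf

lemma exists_SU2_trace_tmat_iff {k : ℕ} {l m n : ℝ} :
    (∃ w ∈ SU2, (tmat k l * (w * tmat k m * w⁻¹)).trace = (tmat k n).trace) ↔
      Real.cos (π * n / k) ∈
        segment ℝ (Real.cos (π * l / k + π * m / k)) (Real.cos (π * l / k - π * m / k)) := by
  simp only [tmat_eq_diagonal, trace_diagonal, Fin.sum_univ_two, cons_val_zero, cons_val_one]
  rw [exists_SU2_trace_eq_iff, exp_I_mul_mul_exp_I_mul, exp_I_mul_mul_conj_exp_I_mul,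
    re_exp_I_mul, re_exp_I_mul, re_exp_I_mul]

lemma cos_mem_segment_iff {A B C : ℝ} (hA : A ∈ Set.Icc 0 π) (hB : B ∈ Set.Icc 0 π)
    (hC : C ∈ Set.Icc 0 π) :
    Real.cos C ∈ segment ℝ (Real.cos (A + B)) (Real.cos (A - B)) ↔
      |A - B| ≤ C ∧ C ≤ min (A + B) (2 * π - A - B) := by
  obtain ⟨hA0, hAπ⟩ := hA
  obtain ⟨hB0, hBπ⟩ := hB
  have hle : Real.cos (A + B) ≤ Real.cos (A - B) := by
    rw [Real.cos_add, Real.cos_sub]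
    nlinarith [mul_nonneg (sin_nonneg_of_nonneg_of_le_pi hA0 hAπ)
      (sin_nonneg_of_nonneg_of_le_pi hB0 hBπ)]
  have hsub : Real.cos (A - B) = Real.cos |A - B| := (Real.cos_abs _).symm
  have hadd : Real.cos (A + B) = Real.cos (min (A + B) (2 * π - A - B)) := by
    rcases min_choice (A + B) (2 * π - A - B) with h | h <;> rw [h]
    rw [sub_sub, Real.cos_two_pi_sub]
  have hsub_mem : |A - B| ∈ Set.Icc 0 π :=
    ⟨abs_nonneg _, abs_sub_le_iff.2 ⟨by linarith, by linarith⟩⟩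
  have hadd_mem : min (A + B) (2 * π - A - B) ∈ Set.Icc 0 π :=
    ⟨le_min (by linarith) (by linarith), min_le_iff.2 (by by_contra!; linarith)⟩
  rw [segment_eq_Icc hle, Set.mem_Icc, hsub, hadd, strictAntiOn_cos.le_iff_ge hadd_mem hC,
    strictAntiOn_cos.le_iff_ge hC hsub_mem, and_comm]

theorem stmt0 (k : ℕ) (hk : 0 < k) (lam mu nu : ℝ)
    (hlam : lam ∈ Set.Icc (0:ℝ) k) (hmu : mu ∈ Set.Icc (0:ℝ) k)
    (hnu : nu ∈ Set.Icc (0:ℝ) k) :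
    (Tset k lam mu nu).Nonempty ↔
      |lam - mu| ≤ nu ∧ nu ≤ min (lam + mu) (2 * k - lam - mu) := by
  set c := π / k
  have hc : 0 < c := div_pos pi_pos (by exact_mod_cast hk)
  have hck : c * k = π := div_mul_cancel₀ π (by positivity)
  have hangle (x : ℝ) : π * x / k = c * x := mul_div_right_comm π x k
  have hmem (x : ℝ) (hx : x ∈ Set.Icc (0:ℝ) k) : c * x ∈ Set.Icc 0 π :=
    ⟨mul_nonneg hc.le hx.1, hck ▸ mul_le_mul_of_nonneg_left hx.2 hc.le⟩
  have hperiod : 2 * π - c * lam - c * mu = c * (2 * k - lam - mu) := by rw [← hck]; ring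
  rw [Tset_nonempty_iff, exists_SU2_trace_tmat_iff, hangle, hangle, hangle,
    cos_mem_segment_iff (hmem lam hlam) (hmem mu hmu) (hmem nu hnu), hperiod, ← mul_sub,
    ← mul_add, abs_mul, abs_of_pos hc, ← mul_min_of_nonneg _ _ hc.le,
    mul_le_mul_iff_of_pos_left hc, mul_le_mul_iff_of_pos_left hc]
end
end

section
/- Fix a positive integer k and let λ, μ, ν be integers with 0 ≤ λ, μ, ν ≤ k. If ν appears in the level-k affine su(2) fusion product [λ]∗[μ], i.e. λ+μ−ν is even and |λ−μ| ≤ ν ≤ min(λ+μ, 2k−λ−μ), then T_{λ,μ}^ν is nonempty. -/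
/-!
Every element of `SU(2)` is `!![a, b; -conj b, conj a]` with `|a|² + |b|² = 1`. When
`0 ≤ θ ≤ π` and `Re a = cos θ`, it is conjugate in `SU(2)` to `diag(e^{iθ}, e^{-iθ})`: its
eigenvectors, suitably normalised, are the columns of a matrix in `SU(2)`.
With `α, β, γ = πλ/k, πμ/k, πν/k`, take `g = t_λ` and `h` with `h₀₀ = cos β + i t`. Then
`Re (g h)₀₀ = cos α cos β - t sin α`, so we need `|t| ≤ sin β` with
`t sin α = cos α cos β - cos γ`. Such a `t` exists as soon as
`cos (α + β) ≤ cos γ ≤ cos (α - β)`, and the fusion inequalities give exactly this.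
-/

open Matrix Complex Real

noncomputable section

open ComplexConjugate

def su2Mat (a b : ℂ) : Matrix (Fin 2) (Fin 2) ℂ := !![a, b; -conj b, conj a]

lemma su2Mat_mul (a b c d : ℂ) :
    su2Mat a b * su2Mat c d = su2Mat (a * c - b * conj d) (a * d + b * conj c) := by
  ext i j; fin_cases i <;> fin_cases j <;> simp [su2Mat] <;> ring

lemma su2Mat_one_zero : su2Mat 1 0 = 1 := by
  simp [su2Mat, Matrix.one_fin_two]

lemma star_su2Mat (a b : ℂ) : star (su2Mat a b) = su2Mat (conj a) (-b) := by
  ext i j; fin_cases i <;> fin_cases j <;> simp [su2Mat]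

lemma det_su2Mat (a b : ℂ) : (su2Mat a b).det = (normSq a + normSq b : ℝ) := by
  simp only [su2Mat, Matrix.det_fin_two_of, Complex.ofReal_add, ← Complex.mul_conj]
  ring

lemma su2Mat_mem_SU2 {a b : ℂ} (h : normSq a + normSq b = 1) : su2Mat a b ∈ SU2 := by
  refine ⟨Matrix.mem_unitaryGroup_iff.mpr ?_, by rw [det_su2Mat, h, Complex.ofReal_one]⟩
  rw [star_su2Mat, su2Mat_mul, ← su2Mat_one_zero]
  congr 1
  · rw [map_neg, mul_neg, sub_neg_eq_add, Complex.mul_conj, Complex.mul_conj,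
      ← Complex.ofReal_add, h, Complex.ofReal_one]
  · rw [Complex.conj_conj]; ring

lemma tmat_eq_su2Mat (k : ℕ) (l : ℝ) :
    tmat k l = su2Mat (Complex.exp ((π * l / k : ℝ) * I)) 0 := by
  ext i j; fin_cases i <;> fin_cases j <;> simp [tmat, su2Mat, ← Complex.exp_conj, mul_comm]

lemma tmat_mem_conjClass (k : ℕ) (l : ℝ) : tmat k l ∈ conjClass k l :=
  ⟨1, ⟨one_mem _, det_one⟩, by rw [one_mul, inv_one, mul_one]⟩

lemma su2Mat_mul_eigenbasis (b : ℂ) (c y s u : ℝ) (hb : normSq b = s ^ 2 - y ^ 2) :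
    su2Mat (c + y * I) b * su2Mat (b * u) (I * ↑(s - y) * u) =
      su2Mat (b * u) (I * ↑(s - y) * u) * su2Mat (c + s * I) 0 := by
  have hbb : b * conj b = s ^ 2 - y ^ 2 := by rw [Complex.mul_conj, hb]; push_cast; ring
  rw [su2Mat_mul, su2Mat_mul]
  congr 1 <;> push_cast <;>
    simp only [map_mul, map_add, map_sub, Complex.conj_ofReal, Complex.conj_I, map_zero]
  · ring
  · linear_combination (u * (s ^ 2 - y ^ 2) : ℂ) * I_sq + u * hbb

lemma exp_mul_I_eq_cos_add_sin (θ : ℝ) :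
    Complex.exp (θ * I) = Real.cos θ + Real.sin θ * I := by
  rw [← Complex.re_add_im (Complex.exp _), exp_ofReal_mul_I_re, exp_ofReal_mul_I_im]

lemma exists_SU2_conj_su2Mat_eq {θ : ℝ} (hθ : 0 ≤ Real.sin θ) {a b : ℂ}
    (ha : a.re = Real.cos θ) (hab : normSq a + normSq b = 1) :
    ∃ x ∈ SU2, su2Mat a b = x * su2Mat (Complex.exp (θ * I)) 0 * x⁻¹ := by
  have hb : normSq b = Real.sin θ ^ 2 - a.im ^ 2 := by
    rw [Complex.normSq_apply, ha] at hab
    linear_combination hab - Real.sin_sq_add_cos_sq θ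
  have him : a.im ≤ Real.sin θ := by nlinarith [Complex.normSq_nonneg b]
  rcases him.eq_or_lt with heq | hlt
  · have hb0 : b = 0 := Complex.normSq_eq_zero.mp (by rw [hb, heq, sub_self])
    have ha' : a = Complex.exp (θ * I) :=
      Complex.ext (by rw [exp_ofReal_mul_I_re, ha]) (by rw [exp_ofReal_mul_I_im, heq])
    exact ⟨1, ⟨one_mem _, det_one⟩, by rw [hb0, ha', one_mul, inv_one, mul_one]⟩
  -- the columns of `x` are eigenvectors of `su2Mat a b`, normalised by `r`
  set r := √(2 * Real.sin θ * (Real.sin θ - a.im))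
  have hr : r ^ 2 = 2 * Real.sin θ * (Real.sin θ - a.im) := sq_sqrt (by nlinarith)
  have hs : 0 < Real.sin θ := by nlinarith [Complex.normSq_nonneg b]
  have hr0 : r ≠ 0 := (Real.sqrt_pos.mpr (by nlinarith)).ne'
  set x := su2Mat (b * ↑r⁻¹) (I * ↑(Real.sin θ - a.im) * ↑r⁻¹)
  have hx : x ∈ SU2 := by
    refine su2Mat_mem_SU2 ?_
    simp only [Complex.normSq_mul, Complex.normSq_I, Complex.normSq_ofReal, hb]
    field_simp
    rw [hr]
    ring
  refine ⟨x, hx, ?_⟩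
  rw [exp_mul_I_eq_cos_add_sin, ← ha, ← su2Mat_mul_eigenbasis b _ _ _ _ hb,
    Matrix.mul_nonsing_inv_cancel_right _ _ (hx.2.symm ▸ isUnit_one), Complex.re_add_im]

lemma su2Mat_mem_conjClass {k : ℕ} {l : ℝ} (hl : 0 ≤ Real.sin (π * l / k)) {a b : ℂ}
    (ha : a.re = Real.cos (π * l / k)) (hab : normSq a + normSq b = 1) :
    su2Mat a b ∈ conjClass k l := by
  have := exists_SU2_conj_su2Mat_eq hl ha hab
  rwa [← tmat_eq_su2Mat] at this

lemma exists_abs_le_mul_eq {s u c : ℝ} (hs : 0 ≤ s) (hu : 0 ≤ u) (hc : |c| ≤ s * u) :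
    ∃ t, |t| ≤ u ∧ s * t = c := by
  rcases hs.eq_or_lt with rfl | hs
  · exact ⟨0, by simpa using hu, by simpa [eq_comm] using hc⟩
  · refine ⟨c / s, ?_, mul_div_cancel₀ c hs.ne'⟩
    rwa [abs_div, abs_of_pos hs, div_le_iff₀' hs]

lemma Tset_nonempty_of_cos_le {k : ℕ} {l m n : ℝ} (hl : 0 ≤ Real.sin (π * l / k))
    (hm : 0 ≤ Real.sin (π * m / k)) (hn : 0 ≤ Real.sin (π * n / k))
    (hlow : Real.cos (π * l / k + π * m / k) ≤ Real.cos (π * n / k))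
    (hup : Real.cos (π * n / k) ≤ Real.cos (π * l / k - π * m / k)) :
    (Tset k l m n).Nonempty := by
  set α := π * l / k
  set β := π * m / k
  set γ := π * n / k
  have hcos : |Real.cos α * Real.cos β - Real.cos γ| ≤ Real.sin α * Real.sin β := by
    rw [Real.cos_add] at hlow
    rw [Real.cos_sub] at hup
    exact abs_le.mpr ⟨by linarith, by linarith⟩
  obtain ⟨t, ht, htγ⟩ := exists_abs_le_mul_eq hl hm hcos
  have ht2 : t ^ 2 ≤ Real.sin β ^ 2 := sq_le_sq' (abs_le.mp ht).1 (abs_le.mp ht).2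
  have hh : normSq (Real.cos β + t * I) + normSq (√(Real.sin β ^ 2 - t ^ 2) : ℂ) = 1 := by
    rw [Complex.normSq_add_mul_I, Complex.normSq_ofReal, ← sq, sq_sqrt (by linarith)]
    linarith [Real.sin_sq_add_cos_sq β]
  have hre : (Real.cos β + t * I : ℂ).re = Real.cos β := by
    rw [Complex.add_re, Complex.ofReal_re, Complex.re_ofReal_mul, Complex.I_re, mul_zero,
      add_zero]
  refine ⟨(tmat k l, su2Mat (Real.cos β + t * I) √(Real.sin β ^ 2 - t ^ 2)),
    tmat_mem_conjClass k l, su2Mat_mem_conjClass hm hre hh, ?_⟩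
  simp only [tmat_eq_su2Mat, su2Mat_mul, zero_mul, sub_zero, add_zero]
  refine su2Mat_mem_conjClass hn ?_ ?_
  · rw [exp_mul_I_eq_cos_add_sin, Complex.mul_re, hre]
    simp only [Complex.add_re, Complex.add_im, Complex.ofReal_re, Complex.ofReal_im,
      Complex.re_ofReal_mul, Complex.im_ofReal_mul, Complex.I_re, Complex.I_im]
    linarith
  · rw [Complex.normSq_mul, Complex.normSq_mul, ← mul_add, hh, mul_one,
      Complex.normSq_eq_norm_sq, Complex.norm_exp_ofReal_mul_I, one_pow]

lemma cos_le_cos_sub_of_abs_sub_le {α β γ : ℝ} (h : |α - β| ≤ γ) (hγ : γ ≤ π) :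
    Real.cos γ ≤ Real.cos (α - β) := by
  rw [← Real.cos_abs (α - β)]
  exact Real.cos_le_cos_of_nonneg_of_le_pi (abs_nonneg _) hγ h

lemma cos_add_le_cos {α β γ : ℝ} (hγ : 0 ≤ γ) (h₁ : γ ≤ α + β)
    (h₂ : γ ≤ 2 * π - (α + β)) :
    Real.cos (α + β) ≤ Real.cos γ := by
  rcases le_total (α + β) π with h | h
  · exact Real.cos_le_cos_of_nonneg_of_le_pi hγ h h₁
  · rw [← Real.cos_two_pi_sub]
    exact Real.cos_le_cos_of_nonneg_of_le_pi hγ (by linarith) h₂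

lemma pi_mul_div_mem_Icc {k : ℕ} {x : ℝ} (hx₀ : 0 ≤ x) (hxk : x ≤ k) :
    π * x / k ∈ Set.Icc 0 π :=
  ⟨by positivity, div_le_of_le_mul₀ k.cast_nonneg pi_pos.le (by gcongr)⟩

theorem stmt1_general (k : ℕ) (hk : 0 < k) (lam mu nu : ℤ)
    (hlam : 0 ≤ lam ∧ lam ≤ k) (hmu : 0 ≤ mu ∧ mu ≤ k) (hnu : 0 ≤ nu ∧ nu ≤ k)
    (h1 : |lam - mu| ≤ nu) (h2 : nu ≤ min (lam + mu) (2 * k - lam - mu)) :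
    (Tset k (lam : ℝ) (mu : ℝ) (nu : ℝ)).Nonempty := by
  have hk' : (0 : ℝ) < k := by exact_mod_cast hk
  have scale {x y : ℝ} (h : x ≤ y) : π * x / k ≤ π * y / k := by gcongr
  have angle {x : ℤ} (hx : 0 ≤ x ∧ x ≤ k) : π * x / k ∈ Set.Icc 0 π :=
    pi_mul_div_mem_Icc (by exact_mod_cast hx.1) (by exact_mod_cast hx.2)
  have sin_angle_nonneg {x : ℤ} (hx : 0 ≤ x ∧ x ≤ k) : 0 ≤ Real.sin (π * x / k) :=
    Real.sin_nonneg_of_nonneg_of_le_pi (angle hx).1 (angle hx).2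
  have habs : |π * lam / k - π * mu / k| = π * |(lam : ℝ) - mu| / k := by
    rw [← sub_div, ← mul_sub, abs_div, abs_mul, abs_of_pos pi_pos, abs_of_pos hk']
  have hadd : π * lam / k + π * mu / k = π * (lam + mu : ℝ) / k := by ring
  have hcompl : 2 * π - π * lam / k - π * mu / k = π * (2 * k - lam - mu : ℝ) / k := by
    field_simp
  refine Tset_nonempty_of_cos_le (sin_angle_nonneg hlam) (sin_angle_nonneg hmu)
    (sin_angle_nonneg hnu) (cos_add_le_cos ?_ ?_ ?_) (cos_le_cos_sub_of_abs_sub_le ?_ ?_)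
  · exact (angle hnu).1
  · rw [hadd]; exact scale (by exact_mod_cast h2.trans (min_le_left _ _))
  · rw [← sub_sub, hcompl]; exact scale (by exact_mod_cast h2.trans (min_le_right _ _))
  · rw [habs]; exact scale (by exact_mod_cast h1)
  · exact (angle hnu).2

theorem stmt1 (k : ℕ) (hk : 0 < k) (lam mu nu : ℤ)
    (hlam : 0 ≤ lam ∧ lam ≤ k) (hmu : 0 ≤ mu ∧ mu ≤ k) (hnu : 0 ≤ nu ∧ nu ≤ k)
    (heven : Even (lam + mu - nu))
    (h1 : |lam - mu| ≤ nu) (h2 : nu ≤ min (lam + mu) (2 * k - lam - mu)) :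
    (Tset k (lam : ℝ) (mu : ℝ) (nu : ℝ)).Nonempty :=
  stmt1_general k hk lam mu nu hlam hmu hnu h1 h2
end
end

section
/- Fix a positive integer k and let λ, μ, ν ∈ (0,k) satisfy |λ−μ| ≤ ν ≤ min(λ+μ, 2k−λ−μ). Let θ ∈ [0, π/2] be such that sin²θ = ( cos(πν/k) − cos(π(λ+μ)/k) ) / ( 2 sin(πλ/k) sin(πμ/k) ), let θ' ∈ [0, π/2] be such that cos²θ' = ( cos(πμ/k) − cos(π(λ+ν)/k) ) / ( 2 sin(πλ/k) sin(πν/k) ), and set φ' = πλ/(2k), a = e^{iθσ₂}, b = e^{iφ'σ₃} · e^{iθ'σ₂}. Then t_λ · a t_μ a⁻¹ = b t_ν b⁻¹. -/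
open Matrix Complex Real

noncomputable section

/-- The rotation matrix `e^{iθσ₂} = [[cos θ, sin θ],[−sin θ, cos θ]]`. -/
def rotY (θ : ℝ) : Matrix (Fin 2) (Fin 2) ℂ :=
  !![((Real.cos θ : ℝ) : ℂ), ((Real.sin θ : ℝ) : ℂ);
     ((-(Real.sin θ) : ℝ) : ℂ), ((Real.cos θ : ℝ) : ℂ)]

/-- The diagonal matrix `e^{iφσ₃} = diag(e^{iφ}, e^{−iφ})`. -/
def diagPhase (φ : ℝ) : Matrix (Fin 2) (Fin 2) ℂ :=
  Matrix.diagonal ![Complex.exp (Complex.I * (φ : ℂ)),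
    Complex.exp (-(Complex.I * (φ : ℂ)))]

lemma rotY_inv' (θ : ℝ) : (rotY θ)⁻¹ = rotY (-θ) := by
  have h := Complex.cos_sq_add_sin_sq (θ:ℂ)
  apply Matrix.inv_eq_right_inv
  ext i j
  fin_cases i <;> fin_cases j <;>
    simp [rotY, Matrix.mul_apply, Fin.sum_univ_two, Matrix.one_apply] <;>
    first | ring1 | linear_combination h

lemma diagPhase_inv' (φ : ℝ) : (diagPhase φ)⁻¹ = diagPhase (-φ) := by
  apply Matrix.inv_eq_right_inv
  ext i j
  fin_cases i <;> fin_cases j <;>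
    simp [diagPhase, Matrix.mul_apply, Fin.sum_univ_two, Matrix.one_apply,
      Matrix.diagonal, ← Complex.exp_add]

lemma expI' (x : ℂ) : Complex.exp (Complex.I * x) =
    Complex.cos x + Complex.sin x * Complex.I := by
  rw [mul_comm, Complex.exp_mul_I]

lemma expnegI' (x : ℂ) : Complex.exp (-(Complex.I * x)) =
    Complex.cos x - Complex.sin x * Complex.I := by
  rw [show -(Complex.I * x) = (-x) * Complex.I by ring,
    Complex.exp_mul_I, Complex.cos_neg, Complex.sin_neg]
  ring

set_option maxHeartbeats 1600000 in
theorem stmt9 (k : ℕ) (hk : 0 < k) (lam mu nu : ℝ)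
    (hlam : lam ∈ Set.Ioo (0:ℝ) k) (hmu : mu ∈ Set.Ioo (0:ℝ) k)
    (hnu : nu ∈ Set.Ioo (0:ℝ) k)
    (h1 : |lam - mu| ≤ nu) (h2 : nu ≤ min (lam + mu) (2 * k - lam - mu))
    (θ θ' : ℝ) (hθ : θ ∈ Set.Icc (0:ℝ) (Real.pi / 2))
    (hθ' : θ' ∈ Set.Icc (0:ℝ) (Real.pi / 2))
    (hsin : (Real.sin θ) ^ 2 =
      (Real.cos (Real.pi * nu / k) - Real.cos (Real.pi * (lam + mu) / k)) /
        (2 * Real.sin (Real.pi * lam / k) * Real.sin (Real.pi * mu / k)))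
    (hcos : (Real.cos θ') ^ 2 =
      (Real.cos (Real.pi * mu / k) - Real.cos (Real.pi * (lam + nu) / k)) /
        (2 * Real.sin (Real.pi * lam / k) * Real.sin (Real.pi * nu / k))) :
    tmat k lam * (rotY θ * tmat k mu * (rotY θ)⁻¹) =
      (diagPhase (Real.pi * lam / (2 * k)) * rotY θ') * tmat k nu *
        (diagPhase (Real.pi * lam / (2 * k)) * rotY θ')⁻¹ := by
  have hkR : (0:ℝ) < (k:ℝ) := by exact_mod_cast hk
  set A := Real.pi * lam / (k:ℝ) with hA
  set B := Real.pi * mu / (k:ℝ) with hB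
  set C := Real.pi * nu / (k:ℝ) with hC
  set H := Real.pi * lam / (2*(k:ℝ)) with hH
  have pipos := Real.pi_pos
  have hAB : Real.pi * (lam + mu) / (k:ℝ) = A + B := by rw [hA, hB]; ring
  have hAC : Real.pi * (lam + nu) / (k:ℝ) = A + C := by rw [hA, hC]; ring
  rw [hAB, Real.cos_add] at hsin
  rw [hAC, Real.cos_add] at hcos
  have hApos : 0 < A := by rw [hA]; exact div_pos (mul_pos pipos hlam.1) hkR
  have hAlt : A < Real.pi := by
    rw [hA, div_lt_iff₀ hkR]
    nlinarith [hlam.2]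
  have hBpos : 0 < B := by rw [hB]; exact div_pos (mul_pos pipos hmu.1) hkR
  have hBlt : B < Real.pi := by
    rw [hB, div_lt_iff₀ hkR]
    nlinarith [hmu.2]
  have hCpos : 0 < C := by rw [hC]; exact div_pos (mul_pos pipos hnu.1) hkR
  have hClt : C < Real.pi := by
    rw [hC, div_lt_iff₀ hkR]
    nlinarith [hnu.2]
  have hsa : 0 < Real.sin A := Real.sin_pos_of_pos_of_lt_pi hApos hAlt
  have hsb : 0 < Real.sin B := Real.sin_pos_of_pos_of_lt_pi hBpos hBlt
  have hsc : 0 < Real.sin C := Real.sin_pos_of_pos_of_lt_pi hCpos hClt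
  have e1 : 2*Real.sin A*Real.sin B*Real.sin θ^2 =
      Real.cos C - (Real.cos A*Real.cos B - Real.sin A*Real.sin B) := by
    rw [hsin]; field_simp
  have e2 : 2*Real.sin A*Real.sin C*Real.cos θ'^2 =
      Real.cos B - (Real.cos A*Real.cos C - Real.sin A*Real.sin C) := by
    rw [hcos]; field_simp
  have pt : Real.sin θ^2 + Real.cos θ^2 = 1 := Real.sin_sq_add_cos_sq θ
  have pt' : Real.sin θ'^2 + Real.cos θ'^2 = 1 := Real.sin_sq_add_cos_sq θ'
  have pA : Real.sin A^2 + Real.cos A^2 = 1 := Real.sin_sq_add_cos_sq A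
  have pB : Real.sin B^2 + Real.cos B^2 = 1 := Real.sin_sq_add_cos_sq B
  have pC : Real.sin C^2 + Real.cos C^2 = 1 := Real.sin_sq_add_cos_sq C
  have id1 : Real.cos A*Real.cos B - Real.sin A*Real.sin B +
      2*Real.sin A*Real.sin B*Real.sin θ^2 = Real.cos C := by linarith
  have id2 : Real.sin A*Real.cos B + Real.cos A*Real.sin B -
      2*Real.cos A*Real.sin B*Real.sin θ^2 = 2*Real.sin C*Real.cos θ'^2 - Real.sin C := by
    have key : Real.sin A * (Real.sin A*Real.cos B + Real.cos A*Real.sin B -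
        2*Real.cos A*Real.sin B*Real.sin θ^2) =
        Real.sin A * (2*Real.sin C*Real.cos θ'^2 - Real.sin C) := by
      linear_combination (-(Real.cos A))*e1 - e2 + Real.cos B*pA
    exact mul_left_cancel₀ hsa.ne' key
  have e1' : 2*Real.sin A*Real.sin B*Real.cos θ^2 =
      Real.sin A*Real.sin B + Real.cos A*Real.cos B - Real.cos C := by
    linear_combination 2*Real.sin A*Real.sin B*pt - e1
  have e2' : 2*Real.sin A*Real.sin C*Real.sin θ'^2 =
      Real.sin A*Real.sin C + Real.cos A*Real.cos C - Real.cos B := by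
    linear_combination 2*Real.sin A*Real.sin C*pt' - e2
  have hsq4 : (2*Real.sin A*(Real.sin B*(Real.sin θ*Real.cos θ)))^2 =
      (2*Real.sin A*(Real.sin C*(Real.sin θ'*Real.cos θ')))^2 := by
    linear_combination (2*Real.sin A*Real.sin B*Real.cos θ^2)*e1 +
      (Real.cos C - (Real.cos A*Real.cos B - Real.sin A*Real.sin B))*e1' -
      (2*Real.sin A*Real.sin C*Real.sin θ'^2)*e2 -
      (Real.cos B - (Real.cos A*Real.cos C - Real.sin A*Real.sin C))*e2' +
      Real.sin A^2*pB - Real.sin A^2*pC + (Real.cos C^2 - Real.cos B^2)*pA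
  have hsq : (Real.sin B*(Real.sin θ*Real.cos θ))^2 =
      (Real.sin C*(Real.sin θ'*Real.cos θ'))^2 := by
    have h4 : (2*Real.sin A)^2 * (Real.sin B*(Real.sin θ*Real.cos θ))^2 =
        (2*Real.sin A)^2 * (Real.sin C*(Real.sin θ'*Real.cos θ'))^2 := by
      linear_combination hsq4
    have hne : ((2*Real.sin A)^2 : ℝ) ≠ 0 := by positivity
    exact mul_left_cancel₀ hne h4
  have hst0 : 0 ≤ Real.sin θ :=
    Real.sin_nonneg_of_nonneg_of_le_pi hθ.1 (by linarith [hθ.2])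
  have hct0 : 0 ≤ Real.cos θ :=
    Real.cos_nonneg_of_mem_Icc ⟨by linarith [hθ.1], hθ.2⟩
  have hst0' : 0 ≤ Real.sin θ' :=
    Real.sin_nonneg_of_nonneg_of_le_pi hθ'.1 (by linarith [hθ'.2])
  have hct0' : 0 ≤ Real.cos θ' :=
    Real.cos_nonneg_of_mem_Icc ⟨by linarith [hθ'.1], hθ'.2⟩
  have id3 : Real.sin B*(Real.sin θ*Real.cos θ) =
      Real.sin C*(Real.sin θ'*Real.cos θ') := by
    have l : 0 ≤ Real.sin B*(Real.sin θ*Real.cos θ) :=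
      mul_nonneg hsb.le (mul_nonneg hst0 hct0)
    have r : 0 ≤ Real.sin C*(Real.sin θ'*Real.cos θ') :=
      mul_nonneg hsc.le (mul_nonneg hst0' hct0')
    rw [← Real.sqrt_sq l, ← Real.sqrt_sq r, hsq]
  have hA2H : A = H + H := by rw [hA, hH]; field_simp; ring
  have idz1 : Real.cos A = Real.cos H^2 - Real.sin H^2 := by
    rw [hA2H, Real.cos_add]; ring
  have idz2 : Real.sin A = 2*Real.sin H*Real.cos H := by
    rw [hA2H, Real.sin_add]; ring
  simp only [hA, hB, hC, hH] at id1 id2 id3 idz1 idz2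
  have c1 := congrArg (Complex.ofReal) id1
  have c2 := congrArg (Complex.ofReal) id2
  have c3 := congrArg (Complex.ofReal) id3
  have z1 := congrArg (Complex.ofReal) idz1
  have z2 := congrArg (Complex.ofReal) idz2
  push_cast at c1 c2 c3 z1 z2
  have pcT := Complex.cos_sq_add_sin_sq (θ:ℂ)
  have pcP := Complex.cos_sq_add_sin_sq (θ':ℂ)
  have pcH := Complex.cos_sq_add_sin_sq ((Real.pi:ℂ)*(lam:ℂ)/(2*(k:ℂ)))
  have Isq := Complex.I_sq
  simp only [hA, hB, hC, hH]
  rw [rotY_inv', Matrix.mul_inv_rev, rotY_inv', diagPhase_inv']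
  ext i j
  fin_cases i <;> fin_cases j <;>
    simp [tmat, rotY, diagPhase, Matrix.mul_apply, Fin.sum_univ_two,
      Matrix.diagonal_apply, Matrix.vecHead, Matrix.vecTail, Function.comp,
      Matrix.vecMul, dotProduct]
  all_goals simp only [expI', expnegI']
  all_goals (
    set cA := Complex.cos ((Real.pi : ℂ) * (lam : ℂ) / (k : ℂ)) with hcA
    set sA := Complex.sin ((Real.pi : ℂ) * (lam : ℂ) / (k : ℂ)) with hsA'
    set cB := Complex.cos ((Real.pi : ℂ) * (mu : ℂ) / (k : ℂ)) with hcB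
    set sB := Complex.sin ((Real.pi : ℂ) * (mu : ℂ) / (k : ℂ)) with hsB'
    set cC := Complex.cos ((Real.pi : ℂ) * (nu : ℂ) / (k : ℂ)) with hcC
    set sC := Complex.sin ((Real.pi : ℂ) * (nu : ℂ) / (k : ℂ)) with hsC'
    set cH := Complex.cos ((Real.pi : ℂ) * (lam : ℂ) / (2 * (k : ℂ))) with hcH
    set sH := Complex.sin ((Real.pi : ℂ) * (lam : ℂ) / (2 * (k : ℂ))) with hsH
    set ct := Complex.cos (θ : ℂ) with hct
    set st := Complex.sin (θ : ℂ) with hst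
    set cp := Complex.cos (θ' : ℂ) with hcp
    set sp := Complex.sin (θ' : ℂ) with hsp)
  · linear_combination c1 + Complex.I * c2 +
      ((cA+sA*Complex.I)*(cB+sB*Complex.I))*pcT - (cC-sC*Complex.I)*pcP -
      (cp^2*(cC+sC*Complex.I)+sp^2*(cC-sC*Complex.I))*pcH +
      (sA*sB*(1-2*st^2) +
        sH^2*(cp^2*(cC+sC*Complex.I)+sp^2*(cC-sC*Complex.I)))*Isq
  · linear_combination (-2*Complex.I*(cA+sA*Complex.I))*c3 +
      (-2*Complex.I*sC*sp*cp)*z1 + (2*sC*sp*cp)*z2 +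
      (2*Complex.I*sC*sp*cp*sH^2 - 2*sA*sC*sp*cp + 4*sC*sp*cp*cH*sH)*Isq
  · linear_combination (-2*Complex.I*(cA-sA*Complex.I))*c3 +
      (-2*Complex.I*sC*sp*cp)*z1 + (-2*sC*sp*cp)*z2 +
      (2*Complex.I*sC*sp*cp*sH^2 + 2*sA*sC*sp*cp - 4*sC*sp*cp*cH*sH)*Isq
  · linear_combination c1 - Complex.I * c2 +
      ((cA-sA*Complex.I)*(cB-sB*Complex.I))*pcT - (cC+sC*Complex.I)*pcP -
      (sp^2*(cC+sC*Complex.I)+cp^2*(cC-sC*Complex.I))*pcH +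
      (sA*sB*(1-2*st^2) +
        sH^2*(sp^2*(cC+sC*Complex.I)+cp^2*(cC-sC*Complex.I)))*Isq
end
end

section
/- Let T denote the diagonal maximal torus of SU(2) (the set of its diagonal elements). If a ∈ SU(2) has both a nonzero diagonal entry and a nonzero off-diagonal entry (i.e. a is neither diagonal nor anti-diagonal), then T ∩ a T a⁻¹ = {I, −I}, the centre of SU(2). -/
open Matrix Complex Real

noncomputable section

/-- The diagonal maximal torus of `SU(2)`: its diagonal elements. -/
def torus : Set (Matrix (Fin 2) (Fin 2) ℂ) :=
  {g | g ∈ SU2 ∧ g 0 1 = 0 ∧ g 1 0 = 0}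

theorem stmt12 (a : Matrix (Fin 2) (Fin 2) ℂ) (ha : a ∈ SU2)
    (hdiag : a 0 0 ≠ 0 ∨ a 1 1 ≠ 0) (hoff : a 0 1 ≠ 0 ∨ a 1 0 ≠ 0) :
    torus ∩ ((fun g => a * g * a⁻¹) '' torus) =
      ({1, -1} : Set (Matrix (Fin 2) (Fin 2) ℂ)) := by
  obtain ⟨haU, haDet⟩ := ha
  have haDetUnit : IsUnit a.det := by simp [haDet]
  have hainv : a * a⁻¹ = 1 := Matrix.mul_nonsing_inv a haDetUnit
  have hinva : a⁻¹ * a = 1 := Matrix.nonsing_inv_mul a haDetUnit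
  have hstar : a⁻¹ = star a :=
    Matrix.inv_eq_right_inv (Matrix.mem_unitaryGroup_iff.mp haU)
  have hadj : a⁻¹ = a.adjugate :=
    Matrix.inv_eq_right_inv (by rw [Matrix.mul_adjugate, haDet, one_smul])
  have e : star a = a.adjugate := hstar.symm.trans hadj
  have h11 : (starRingEnd ℂ) (a 0 0) = a 1 1 := by
    have := congrFun (congrFun e 0) 0
    simpa [Matrix.star_apply, Matrix.adjugate_fin_two] using this
  have h01 : (starRingEnd ℂ) (a 1 0) = -(a 0 1) := by
    have := congrFun (congrFun e 0) 1
    simpa [Matrix.star_apply, Matrix.adjugate_fin_two] using this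
  have ha00 : a 0 0 ≠ 0 := by
    rcases hdiag with h | h
    · exact h
    · intro h0; rw [← h11, h0] at h; simp at h
  have ha11 : a 1 1 ≠ 0 := by rw [← h11]; simpa using ha00
  have ha01 : a 0 1 ≠ 0 := by
    rcases hoff with h | h
    · exact h
    · intro h0
      rw [h0] at h01
      apply h
      have : (starRingEnd ℂ) (a 1 0) = 0 := by rw [h01]; ring
      simpa using this
  have ha10 : a 1 0 ≠ 0 := by
    intro h0; rw [h0] at h01; simp at h01; exact ha01 h01
  ext g
  simp only [Set.mem_inter_iff, Set.mem_image, Set.mem_insert_iff,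
    Set.mem_singleton_iff]
  constructor
  · rintro ⟨⟨⟨gU, gdet⟩, g01, g10⟩, h, ⟨⟨hU, hdet⟩, h01', h10'⟩, heq⟩
    have hga : g * a = a * h := by
      rw [← heq, Matrix.mul_assoc, Matrix.mul_assoc, hinva, Matrix.mul_one]
    have e00 := congrFun (congrFun hga 0) 0
    have e01 := congrFun (congrFun hga 0) 1
    have e10 := congrFun (congrFun hga 1) 0
    simp only [Matrix.mul_apply, Fin.sum_univ_two, g01, g10, h01', h10',
      zero_mul, mul_zero, add_zero, zero_add] at e00 e01 e10
    -- e00 : g 0 0 * a 0 0 = a 0 0 * h 0 0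
    -- e01 : g 0 0 * a 0 1 = a 0 1 * h 1 1
    -- e10 : g 1 1 * a 1 0 = a 1 0 * h 0 0
    have k1 : g 0 0 = h 0 0 := by
      apply mul_right_cancel₀ ha00; rw [e00]; ring
    have k2 : g 0 0 = h 1 1 := by
      apply mul_right_cancel₀ ha01; rw [e01]; ring
    have k3 : g 1 1 = h 0 0 := by
      apply mul_right_cancel₀ ha10; rw [e10]; ring
    have keq : g 1 1 = g 0 0 := by rw [k3, ← k1]
    have hdet2 : g 0 0 * g 0 0 = 1 := by
      have := gdet
      rw [Matrix.det_fin_two, g01, g10, keq] at this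
      simpa using this
    rcases mul_self_eq_one_iff.mp hdet2 with h1 | h1
    · left
      ext i j
      fin_cases i <;> fin_cases j <;>
        simp [g01, g10, h1, keq, Matrix.one_apply]
    · right
      ext i j
      fin_cases i <;> fin_cases j <;>
        simp [g01, g10, h1, keq, Matrix.one_apply]
  · have h1T : (1 : Matrix (Fin 2) (Fin 2) ℂ) ∈ torus :=
      ⟨⟨one_mem _, Matrix.det_one⟩, by simp [Matrix.one_apply], by
        simp [Matrix.one_apply]⟩
    have hm1T : (-1 : Matrix (Fin 2) (Fin 2) ℂ) ∈ torus := by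
      refine ⟨⟨?_, ?_⟩, ?_, ?_⟩
      · rw [Matrix.mem_unitaryGroup_iff]; simp
      · simp [Matrix.det_neg]
      · simp [Matrix.one_apply]
      · simp [Matrix.one_apply]
    rintro (rfl | rfl)
    · exact ⟨h1T, 1, h1T, by rw [mul_one, hainv]⟩
    · exact ⟨hm1T, -1, hm1T, by rw [mul_neg, mul_one, neg_mul, hainv]⟩
end
end

section
/- There is no continuous map b from SU(2) to the circle group U(1) such that b(−h) = −b(h) for all h ∈ SU(2). -/
open Matrix Complex Real

noncomputable section

/-!
If `b` were such a map, compose it with a null-homotopy in `SU(2)` of the loop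
`t ↦ diag (exp (iπt), exp (-iπt))`, `t ∈ [0, 2]`, and lift the resulting map `ℝ × ℝ → U(1)`
through the covering `ℝ → U(1)`. Since the loop passes from `1` to `-1` at `t = 1` and then
repeats itself negated, oddness of `b` makes both halves of the lifted loop wind by the same
amount `d ≡ π (mod 2π)`, so the loop winds by `2d ≠ 0`; but winding numbers are constant along
the homotopy, and the constant loop winds by `0`.
-/

theorem Circle.exists_continuous_lift {A : Type*} [TopologicalSpace A] [SimplyConnectedSpace A]
    [LocallyPathConnectedSpace A] (f : C(A, Circle)) :
    ∃ φ : C(A, ℝ), ∀ a, Circle.exp (φ a) = f a := by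
  obtain ⟨a₀⟩ := (inferInstance : Nonempty A)
  obtain ⟨t₀, ht₀⟩ := Circle.exp_surjective (f a₀)
  obtain ⟨φ, ⟨-, hφ⟩, -⟩ := Circle.isCoveringMap_exp.existsUnique_continuousMap_lifts f a₀ t₀ ht₀
  exact ⟨φ, congrFun hφ⟩

theorem Circle.not_antiperiodic_of_nullhomotopic (F : C(ℝ × ℝ, Circle))
    (hperiodic : ∀ s, F (s, 2) = F (s, 0)) (hconst : ∀ t, F (1, t) = F (1, 0)) :
    ¬ ∀ t, F (0, t + 1) = -F (0, t) := by
  intro hanti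
  obtain ⟨φ, hφ⟩ := Circle.exists_continuous_lift F
  have hexp := Circle.isCoveringMap_exp
  have hwind : φ (0, 2) - φ (0, 0) = φ (1, 2) - φ (1, 0) :=
    hexp.const_of_comp (g := fun s ↦ φ (s, 2) - φ (s, 0)) (by fun_prop)
      (fun s s' ↦ by simp only [Circle.exp_sub, hφ, hperiodic, div_self']) 0 1
  have hend : φ (1, 2) = φ (1, 0) :=
    hexp.const_of_comp (g := fun t ↦ φ (1, t)) (by fun_prop)
      (fun t t' ↦ by simp only [hφ, hconst]) 2 0
  have hhalf : φ (0, 1 + 1) - φ (0, 1) = φ (0, 0 + 1) - φ (0, 0) := by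
    have hneg (t : ℝ) : F (0, t + 1) / F (0, t) = -1 := by
      rw [hanti t, div_eq_mul_inv, neg_mul, mul_inv_cancel]
    exact hexp.const_of_comp (g := fun t ↦ φ (0, t + 1) - φ (0, t)) (by fun_prop)
      (fun t t' ↦ by simp only [Circle.exp_sub, hφ, hneg]) 1 0
  have hclosed : F (0, 0 + 1) = F (0, 0) := by
    rw [← hφ, ← hφ, zero_add]
    congr 1
    rw [one_add_one_eq_two, zero_add] at hhalf
    linarith
  exact Circle.neg_ne_self _ ((hanti 0).symm.trans hclosed)

open ComplexConjugate

/-- The quaternion `z + w j`; `SU(2)` consists of these matrices with `|z|² + |w|² = 1`. -/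
def quatMatrix (z w : ℂ) : Matrix (Fin 2) (Fin 2) ℂ :=
  !![z, w; -conj w, conj z]

lemma quatMatrix_mem_SU2 {z w : ℂ} (h : normSq z + normSq w = 1) : quatMatrix z w ∈ SU2 := by
  have h' : z * conj z + w * conj w = 1 := by
    rw [mul_conj, mul_conj, ← ofReal_add, h, ofReal_one]
  refine ⟨?_, ?_⟩
  · rw [mem_unitaryGroup_iff']
    ext i j
    fin_cases i <;> fin_cases j <;>
      simp [quatMatrix, mul_apply, Fin.sum_univ_two] <;> first | linear_combination h' | ring
  · rw [quatMatrix, det_fin_two_of]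
    linear_combination h'

lemma quatMatrix_neg (z w : ℂ) : quatMatrix (-z) (-w) = -quatMatrix z w := by
  ext i j
  fin_cases i <;> fin_cases j <;> simp [quatMatrix]

@[fun_prop]
lemma Continuous.quatMatrix {X : Type*} [TopologicalSpace X] {f g : X → ℂ} (hf : Continuous f)
    (hg : Continuous g) : Continuous fun x ↦ quatMatrix (f x) (g x) := by
  refine continuous_matrix fun i j ↦ ?_
  fin_cases i <;> fin_cases j <;> simp [_root_.quatMatrix] <;> fun_prop

/-- `cos (πs/2) exp (iπt) + sin (πs/2) j`: at `s = 0` the loop `diag (exp (iπt), exp (-iπt))`,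
at `s = 1` the constant `j`. -/
def su2Homotopy (p : ℝ × ℝ) : Matrix (Fin 2) (Fin 2) ℂ :=
  quatMatrix (Real.cos (π * p.1 / 2) * Complex.exp (π * p.2 * I)) (Real.sin (π * p.1 / 2))

lemma su2Homotopy_mem_SU2 (p : ℝ × ℝ) : su2Homotopy p ∈ SU2 := by
  apply quatMatrix_mem_SU2
  rw [map_mul, normSq_ofReal, normSq_ofReal, normSq_eq_norm_sq, ← ofReal_mul,
    norm_exp_ofReal_mul_I]
  linear_combination Real.cos_sq_add_sin_sq (π * p.1 / 2)

lemma continuous_su2Homotopy : Continuous su2Homotopy := by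
  unfold su2Homotopy
  fun_prop

lemma su2Homotopy_zero_add_one (t : ℝ) : su2Homotopy (0, t + 1) = -su2Homotopy (0, t) := by
  rw [su2Homotopy, su2Homotopy, ← quatMatrix_neg]
  simp [mul_add, add_mul, Complex.exp_add]

lemma su2Homotopy_two (s : ℝ) : su2Homotopy (s, 2) = su2Homotopy (s, 0) := by
  simp [su2Homotopy, mul_comm (π : ℂ) 2]

lemma su2Homotopy_one (t : ℝ) : su2Homotopy (1, t) = su2Homotopy (1, 0) := by
  simp [su2Homotopy]

theorem stmt15 :
    ¬ ∃ b : Matrix (Fin 2) (Fin 2) ℂ → ℂ,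
        ContinuousOn b SU2 ∧ (∀ g ∈ SU2, ‖b g‖ = 1) ∧
          (∀ g ∈ SU2, b (-g) = -(b g)) := by
  rintro ⟨b, hb, hnorm, hodd⟩
  let F : C(ℝ × ℝ, Circle) :=
    ⟨fun p ↦ ⟨b (su2Homotopy p), mem_sphere_zero_iff_norm.2 (hnorm _ (su2Homotopy_mem_SU2 p))⟩,
      (hb.comp_continuous continuous_su2Homotopy su2Homotopy_mem_SU2).subtype_mk _⟩
  refine Circle.not_antiperiodic_of_nullhomotopic F (fun s ↦ ?_) (fun t ↦ ?_) (fun t ↦ ?_)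
  · exact Circle.ext (congrArg b (su2Homotopy_two s))
  · exact Circle.ext (congrArg b (su2Homotopy_one t))
  · exact Circle.ext
      ((congrArg b (su2Homotopy_zero_add_one t)).trans (hodd _ (su2Homotopy_mem_SU2 _)))
end
end

section
/- Fix a positive integer k and let λ, μ, ν ∈ [0,k] satisfy the strict inequalities |λ−μ| < ν < min(λ+μ, 2k−λ−μ). Then for every (g,h) ∈ T_{λ,μ}^ν, the simultaneous centralizer {x ∈ SU(2) : x g x⁻¹ = g and x h x⁻¹ = h} equals {I, −I}, the centre of SU(2). -/
open Matrix Complex Real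

noncomputable section

namespace Stmt17Aux

abbrev M2 := Matrix (Fin 2) (Fin 2) ℂ

lemma su2_isUnit {x : M2} (hx : x ∈ SU2) : IsUnit x.det := by
  rw [hx.2]; exact isUnit_one

lemma su2_inv_mul {x : M2} (hx : x ∈ SU2) : x⁻¹ * x = 1 :=
  Matrix.nonsing_inv_mul x (su2_isUnit hx)

lemma su2_mul_inv {x : M2} (hx : x ∈ SU2) : x * x⁻¹ = 1 :=
  Matrix.mul_nonsing_inv x (su2_isUnit hx)

lemma su2_one : (1 : M2) ∈ SU2 :=
  ⟨by rw [Matrix.mem_unitaryGroup_iff]; simp, by simp⟩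

lemma su2_neg_one : (-1 : M2) ∈ SU2 := by
  refine ⟨by rw [Matrix.mem_unitaryGroup_iff]; simp, ?_⟩
  rw [show (-1 : M2) = -(1 : M2) from rfl, Matrix.det_neg]
  simp

/-- conjugation-style algebra helper -/
lemma conj_mul (a x g : M2) (haa' : a * a⁻¹ = 1) :
    (a⁻¹ * x * a) * (a⁻¹ * g * a) = a⁻¹ * (x * g) * a := by
  have key : ∀ z : M2, a * (a⁻¹ * z) = z := fun z => by
    rw [← Matrix.mul_assoc, haa', Matrix.one_mul]
  simp only [Matrix.mul_assoc, key]

lemma trace_conj' (a h : M2) (haa' : a * a⁻¹ = 1) : (a⁻¹ * h * a).trace = h.trace := by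
  rw [Matrix.trace_mul_comm, ← Matrix.mul_assoc, haa', Matrix.one_mul]

lemma trace_conj {x : M2} (hx : x ∈ SU2) (t : M2) : (x * t * x⁻¹).trace = t.trace := by
  rw [Matrix.trace_mul_comm, ← Matrix.mul_assoc, su2_inv_mul hx, Matrix.one_mul]

lemma det_conj {x : M2} (hx : x ∈ SU2) (t : M2) : (x * t * x⁻¹).det = t.det := by
  rw [Matrix.det_mul, Matrix.det_mul, hx.2, Matrix.det_nonsing_inv, hx.2]
  simp

lemma det_conj' (a h : M2) (haa' : a * a⁻¹ = 1) : (a⁻¹ * h * a).det = h.det := by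
  have h5 : a.det * a⁻¹.det = 1 := by rw [← Matrix.det_mul, haa', Matrix.det_one]
  rw [Matrix.det_mul, Matrix.det_mul]
  linear_combination (h.det) * h5

lemma det_tmat (k : ℕ) (l : ℝ) : (tmat k l).det = 1 := by
  simp [tmat, Matrix.det_fin_two, ← Complex.exp_add]

lemma trace_mem_conj {k : ℕ} {l : ℝ} {h : M2} (hm : h ∈ conjClass k l) :
    h.trace = (tmat k l).trace := by
  obtain ⟨b, hb, rfl⟩ := hm
  exact trace_conj hb _

lemma det_mem_conj {k : ℕ} {l : ℝ} {h : M2} (hm : h ∈ conjClass k l) : h.det = 1 := by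
  obtain ⟨b, hb, rfl⟩ := hm
  rw [det_conj hb, det_tmat]

lemma exp_add_exp_neg (r : ℝ) :
    Complex.exp (Complex.I * r) + Complex.exp (-(Complex.I * r)) = 2 * (Real.cos r : ℂ) := by
  rw [mul_comm Complex.I (r:ℂ), ← neg_mul, Complex.exp_mul_I, Complex.exp_mul_I,
    Complex.cos_neg, Complex.sin_neg, ← Complex.ofReal_cos]
  ring

lemma trace_tmat (k : ℕ) (l : ℝ) :
    (tmat k l).trace = 2 * ((Real.cos (Real.pi * l / k) : ℝ) : ℂ) := by
  rw [Matrix.trace_fin_two]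
  have h1 : tmat k l 0 0 = Complex.exp (Complex.I * ((Real.pi * l / k : ℝ) : ℂ)) := by
    simp [tmat]
  have h2 : tmat k l 1 1 = Complex.exp (-(Complex.I * ((Real.pi * l / k : ℝ) : ℂ))) := by
    simp [tmat]
  rw [h1, h2, exp_add_exp_neg]

lemma exp_ne (r : ℝ) (h0 : 0 < r) (hpi : r < Real.pi) :
    Complex.exp (Complex.I * r) ≠ Complex.exp (-(Complex.I * r)) := by
  intro h
  rw [Complex.exp_eq_exp_iff_exists_int] at h
  obtain ⟨n, hn⟩ := h
  have h2 : Complex.I * (2*(r:ℂ)) = Complex.I * ((n:ℂ) * (2*(Real.pi:ℂ))) := by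
    linear_combination hn
  have h3 : (2*r : ℂ) = (n:ℂ) * (2*(Real.pi:ℂ)) := mul_left_cancel₀ Complex.I_ne_zero h2
  have h4 : (2*r : ℝ) = (n:ℝ) * (2*Real.pi) := by exact_mod_cast h3
  have hpi0 := Real.pi_pos
  have hn0 : 0 < (n:ℝ) := by nlinarith
  have hn1 : (1:ℝ) ≤ (n:ℝ) := by
    have : (0:ℤ) < n := by exact_mod_cast hn0
    have : (1:ℤ) ≤ n := this
    exact_mod_cast this
  nlinarith

lemma cos_cases (k : ℕ) (hk : 0 < k) (lam mu nu : ℝ)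
    (hl0 : 0 ≤ lam) (hlk : lam ≤ k) (hm0 : 0 ≤ mu) (hmk : mu ≤ k)
    (hn0 : 0 ≤ nu) (hnk : nu ≤ k)
    (h1 : |lam - mu| < nu) (h2 : nu < min (lam + mu) (2*(k:ℝ) - lam - mu))
    (heq : Real.cos (Real.pi * nu / k) = Real.cos (Real.pi * lam / k + Real.pi * mu / k) ∨
           Real.cos (Real.pi * nu / k) = Real.cos (Real.pi * lam / k - Real.pi * mu / k)) :
    False := by
  have hk' : (0:ℝ) < k := by exact_mod_cast hk
  have hpi := Real.pi_pos
  have h2a : nu < lam + mu := lt_of_lt_of_le h2 (min_le_left _ _)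
  have h2b : nu < 2*(k:ℝ) - lam - mu := lt_of_lt_of_le h2 (min_le_right _ _)
  have hmem : ∀ r : ℝ, 0 ≤ r → r ≤ k → Real.pi * r / k ∈ Set.Icc 0 Real.pi := by
    intro r hr hrk
    constructor
    · positivity
    · rw [div_le_iff₀ hk']; nlinarith
  have key : ∀ r : ℝ, 0 ≤ r → r ≤ k →
      Real.cos (Real.pi * nu / k) = Real.cos (Real.pi * r / k) → nu = r := by
    intro r hr hrk hc
    have h5 := Real.injOn_cos (hmem nu hn0 hnk) (hmem r hr hrk) hc
    have h6 : (Real.pi / k) * nu = (Real.pi / k) * r := by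
      rw [div_mul_eq_mul_div, div_mul_eq_mul_div]; exact h5
    exact mul_left_cancel₀ (by positivity) h6
  rcases heq with heq | heq
  · rw [show Real.pi * lam / k + Real.pi * mu / k = Real.pi * (lam + mu) / k by ring] at heq
    rcases le_or_gt (lam + mu) ((k:ℝ)) with hle | hgt
    · have := key (lam+mu) (by linarith) hle heq
      linarith
    · rw [show Real.pi * (lam+mu) / k = 2*Real.pi - Real.pi * (2*(k:ℝ) - lam - mu) / k by
        field_simp; ring, Real.cos_two_pi_sub] at heq
      have := key (2*(k:ℝ) - lam - mu) (by linarith) (by linarith) heq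
      linarith
  · have habs1 := le_abs_self (lam - mu)
    have habs2 := neg_abs_le (lam - mu)
    rcases le_or_gt mu lam with hle | hgt
    · rw [show Real.pi * lam / k - Real.pi * mu / k = Real.pi * (lam - mu) / k by ring] at heq
      have h7 := key (lam - mu) (by linarith) (by linarith) heq
      rw [_root_.abs_of_nonneg (by linarith : (0:ℝ) ≤ lam - mu)] at h1
      linarith
    · rw [show Real.pi * lam / k - Real.pi * mu / k = -(Real.pi * (mu - lam) / k) by ring,
        Real.cos_neg] at heq
      have h7 := key (mu - lam) (by linarith) (by linarith) heq
      rw [abs_of_neg (by linarith : lam - mu < 0)] at h1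
      linarith

set_option maxHeartbeats 1000000 in
lemma core (k : ℕ) (hk : 0 < k) (lam mu nu : ℝ)
    (hl0 : 0 < lam) (hlk : lam < k) (hm0 : 0 < mu) (hmk : mu < k)
    (hn0 : 0 ≤ nu) (hnk : nu ≤ k)
    (h1 : |lam - mu| < nu) (h2 : nu < min (lam + mu) (2*(k:ℝ) - lam - mu))
    (y h : M2) (hdy : y.det = 1)
    (hyt : y * tmat k lam = tmat k lam * y)
    (hyh : y * h = h * y)
    (hth : h.trace = (tmat k mu).trace) (hdh : h.det = 1)
    (htr : (tmat k lam * h).trace = (tmat k nu).trace) :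
    y = 1 ∨ y = -1 := by
  have hk' : (0:ℝ) < k := by exact_mod_cast hk
  have hpi := Real.pi_pos
  have ha0 : 0 < Real.pi * lam / k := by positivity
  have hapi : Real.pi * lam / k < Real.pi := by rw [div_lt_iff₀ hk']; nlinarith
  set E : ℂ := Complex.exp (Complex.I * ((Real.pi * lam / k : ℝ) : ℂ)) with hE
  set E' : ℂ := Complex.exp (-(Complex.I * ((Real.pi * lam / k : ℝ) : ℂ))) with hE'
  have htne : E ≠ E' := exp_ne _ ha0 hapi
  -- y is diagonal
  have e01 : (y * tmat k lam) 0 1 = (tmat k lam * y) 0 1 := by rw [hyt]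
  have e10 : (y * tmat k lam) 1 0 = (tmat k lam * y) 1 0 := by rw [hyt]
  simp only [Matrix.mul_apply, Fin.sum_univ_two, tmat, Matrix.diagonal_apply,
    Matrix.cons_val_zero, Matrix.cons_val_one, Matrix.head_cons] at e01 e10
  norm_num at e01 e10
  rw [show ((π:ℂ) * (lam:ℂ) / (k:ℂ)) = ((Real.pi * lam / k : ℝ) : ℂ) by push_cast; ring,
    ← hE, ← hE'] at e01 e10
  -- e01 : y 0 1 * E' = E * y 0 1 (hopefully)
  have hy01 : y 0 1 = 0 := by
    have hfac : y 0 1 * (E' - E) = 0 := by linear_combination e01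
    rcases mul_eq_zero.mp hfac with h' | h'
    · exact h'
    · exact absurd (by linear_combination h' : E' = E) (Ne.symm htne)
  have hy10 : y 1 0 = 0 := by
    have hfac : y 1 0 * (E - E') = 0 := by linear_combination e10
    rcases mul_eq_zero.mp hfac with h' | h'
    · exact h'
    · exact absurd (by linear_combination h' : E = E') htne
  by_cases hc : y 0 0 = y 1 1
  · -- y = ±1
    rw [Matrix.det_fin_two, hy01, hy10, ← hc] at hdy
    have hsq : (y 0 0 - 1) * (y 0 0 + 1) = 0 := by linear_combination hdy
    rcases mul_eq_zero.mp hsq with h' | h'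
    · left
      have h00 : y 0 0 = 1 := by linear_combination h'
      ext i j
      fin_cases i <;> fin_cases j <;>
        simp [hy01, hy10, h00, ← hc, Matrix.one_apply]
    · right
      have h00 : y 0 0 = -1 := by linear_combination h'
      ext i j
      fin_cases i <;> fin_cases j <;>
        simp [hy01, hy10, h00, ← hc, Matrix.one_apply]
  · -- h is diagonal
    exfalso
    have f01 : (y * h) 0 1 = (h * y) 0 1 := by rw [hyh]
    have f10 : (y * h) 1 0 = (h * y) 1 0 := by rw [hyh]
    simp only [Matrix.mul_apply, Fin.sum_univ_two, hy01, hy10, zero_mul, mul_zero,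
      add_zero, zero_add] at f01 f10
    -- f01 : y 0 0 * h 0 1 = h 0 1 * y 1 1
    have hcd : y 0 0 - y 1 1 ≠ 0 := sub_ne_zero_of_ne hc
    have hh01 : h 0 1 = 0 := by
      have hfac : h 0 1 * (y 0 0 - y 1 1) = 0 := by linear_combination f01
      rcases mul_eq_zero.mp hfac with h' | h'
      · exact h'
      · exact absurd h' hcd
    have hh10 : h 1 0 = 0 := by
      have hfac : h 1 0 * (y 0 0 - y 1 1) = 0 := by linear_combination -f10
      rcases mul_eq_zero.mp hfac with h' | h'
      · exact h'
      · exact absurd h' hcd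
    -- h 0 0 and h 1 1 are exp(± i π μ / k)
    set F : ℂ := Complex.exp (Complex.I * ((Real.pi * mu / k : ℝ) : ℂ)) with hF
    set F' : ℂ := Complex.exp (-(Complex.I * ((Real.pi * mu / k : ℝ) : ℂ))) with hF'
    have hFF' : F * F' = 1 := by rw [hF, hF', ← Complex.exp_add]; simp
    have hF0 : F ≠ 0 := Complex.exp_ne_zero _
    have hF'0 : F' ≠ 0 := Complex.exp_ne_zero _
    have hsum : h 0 0 + h 1 1 = F + F' := by
      rw [Matrix.trace_fin_two] at hth
      rw [hth, Matrix.trace_fin_two]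
      congr 1 <;> simp [tmat]
    have hprod : h 0 0 * h 1 1 = 1 := by
      rw [Matrix.det_fin_two, hh01, hh10] at hdh
      linear_combination hdh
    have hfact : (h 0 0 - F) * (h 0 0 - F') = 0 := by
      linear_combination (h 0 0) * hsum + hFF' - hprod
    -- trace of t * h
    have htr' : E * h 0 0 + E' * h 1 1 = 2 * ((Real.cos (Real.pi * nu / k) : ℝ) : ℂ) := by
      rw [← trace_tmat k nu, ← htr, Matrix.trace_fin_two]
      simp only [Matrix.mul_apply, Fin.sum_univ_two]
      have t00 : tmat k lam 0 0 = E := by simp [tmat, hE]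
      have t11 : tmat k lam 1 1 = E' := by simp [tmat, hE']
      have t01 : tmat k lam 0 1 = 0 := by simp [tmat]
      have t10 : tmat k lam 1 0 = 0 := by simp [tmat]
      rw [t00, t11, t01, t10, hh01, hh10]
      ring
    have hEF : E * F = Complex.exp (Complex.I * ((Real.pi * lam / k + Real.pi * mu / k : ℝ) : ℂ)) := by
      rw [hE, hF, ← Complex.exp_add]
      congr 1
      push_cast
      ring
    have hE'F' : E' * F' = Complex.exp (-(Complex.I * ((Real.pi * lam / k + Real.pi * mu / k : ℝ) : ℂ))) := by
      rw [hE', hF', ← Complex.exp_add]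
      congr 1
      push_cast
      ring
    have hEF' : E * F' = Complex.exp (Complex.I * ((Real.pi * lam / k - Real.pi * mu / k : ℝ) : ℂ)) := by
      rw [hE, hF', ← Complex.exp_add]
      congr 1
      push_cast
      ring
    have hE'F : E' * F = Complex.exp (-(Complex.I * ((Real.pi * lam / k - Real.pi * mu / k : ℝ) : ℂ))) := by
      rw [hE', hF, ← Complex.exp_add]
      congr 1
      push_cast
      ring
    apply cos_cases k hk lam mu nu (le_of_lt hl0) (le_of_lt hlk) (le_of_lt hm0)
      (le_of_lt hmk) hn0 hnk h1 h2
    have hcosnu : (2:ℂ) * ((Real.cos (Real.pi * nu / k) : ℝ) : ℂ)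
        = Complex.exp (Complex.I * ((Real.pi * nu / k : ℝ) : ℂ))
          + Complex.exp (-(Complex.I * ((Real.pi * nu / k : ℝ) : ℂ))) :=
      (exp_add_exp_neg _).symm
    rcases mul_eq_zero.mp hfact with h' | h'
    · -- h 0 0 = F, h 1 1 = F'
      left
      have h00 : h 0 0 = F := by linear_combination h'
      have h11 : h 1 1 = F' := by
        have hq : F * h 1 1 = F * F' := by rw [hFF']; linear_combination hprod - (h 1 1) * h'
        exact mul_left_cancel₀ hF0 hq
      have h9 : ((Real.cos (Real.pi * nu / k) : ℝ) : ℂ)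
          = ((Real.cos (Real.pi * lam / k + Real.pi * mu / k) : ℝ) : ℂ) := by
        linear_combination ((1:ℂ)/2) * (-htr' + E * h00 + E' * h11 + hEF + hE'F'
          + exp_add_exp_neg (Real.pi * lam / k + Real.pi * mu / k))
      exact_mod_cast h9
    · -- h 0 0 = F', h 1 1 = F
      right
      have h00 : h 0 0 = F' := by linear_combination h'
      have h11 : h 1 1 = F := by
        have hq : F' * h 1 1 = F' * F := by
          rw [mul_comm F' F, hFF']; linear_combination hprod - (h 1 1) * h'
        exact mul_left_cancel₀ hF'0 hq
      have h9 : ((Real.cos (Real.pi * nu / k) : ℝ) : ℂ)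
          = ((Real.cos (Real.pi * lam / k - Real.pi * mu / k) : ℝ) : ℂ) := by
        linear_combination ((1:ℂ)/2) * (-htr' + E * h00 + E' * h11 + hEF' + hE'F
          + exp_add_exp_neg (Real.pi * lam / k - Real.pi * mu / k))
      exact_mod_cast h9

end Stmt17Aux

open Stmt17Aux in
theorem stmt17 (k : ℕ) (hk : 0 < k) (lam mu nu : ℝ)
    (hlam : lam ∈ Set.Icc (0:ℝ) k) (hmu : mu ∈ Set.Icc (0:ℝ) k)
    (hnu : nu ∈ Set.Icc (0:ℝ) k)
    (h1 : |lam - mu| < nu) (h2 : nu < min (lam + mu) (2 * k - lam - mu)) :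
    ∀ p ∈ Tset k lam mu nu,
      {x : Matrix (Fin 2) (Fin 2) ℂ |
          x ∈ SU2 ∧ x * p.1 * x⁻¹ = p.1 ∧ x * p.2 * x⁻¹ = p.2} =
        ({1, -1} : Set (Matrix (Fin 2) (Fin 2) ℂ)) := by
  obtain ⟨hl0, hlk⟩ := hlam
  obtain ⟨hm0, hmk⟩ := hmu
  obtain ⟨hn0, hnk⟩ := hnu
  have h2a : nu < lam + mu := lt_of_lt_of_le h2 (min_le_left _ _)
  have h2b : nu < 2*(k:ℝ) - lam - mu := lt_of_lt_of_le h2 (min_le_right _ _)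
  have habs1 := le_abs_self (lam - mu)
  have habs2 := neg_abs_le (lam - mu)
  have h0l : 0 < lam := by linarith
  have h0m : 0 < mu := by linarith
  have hlk' : lam < k := by linarith
  have hmk' : mu < k := by linarith
  rintro ⟨g, h⟩ ⟨⟨a, ha, hg⟩, hm, hn⟩
  dsimp only at hg hm hn
  have haa : a⁻¹ * a = 1 := su2_inv_mul ha
  have haa' : a * a⁻¹ = 1 := su2_mul_inv ha
  ext x
  simp only [Set.mem_setOf_eq, Set.mem_insert_iff, Set.mem_singleton_iff]
  constructor
  · rintro ⟨hx, hxg, hxh⟩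
    have hxx : x⁻¹ * x = 1 := su2_inv_mul hx
    have hxg' : x * g = g * x := by
      have h3 := congrArg (· * x) hxg
      rw [Matrix.mul_assoc (x * g) x⁻¹ x, hxx, Matrix.mul_one] at h3
      exact h3
    have hxh' : x * h = h * x := by
      have h3 := congrArg (· * x) hxh
      rw [Matrix.mul_assoc (x * h) x⁻¹ x, hxx, Matrix.mul_one] at h3
      exact h3
    have ht' : a⁻¹ * g * a = tmat k lam := by
      rw [hg]
      simp only [← Matrix.mul_assoc]
      rw [haa, Matrix.one_mul, Matrix.mul_assoc, haa, Matrix.mul_one]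
    have hyt : (a⁻¹ * x * a) * tmat k lam = tmat k lam * (a⁻¹ * x * a) := by
      rw [← ht', conj_mul a x g haa', conj_mul a g x haa', hxg']
    have hyh : (a⁻¹ * x * a) * (a⁻¹ * h * a) = (a⁻¹ * h * a) * (a⁻¹ * x * a) := by
      rw [conj_mul a x h haa', conj_mul a h x haa', hxh']
    have hdy : (a⁻¹ * x * a).det = 1 := by rw [det_conj' a x haa', hx.2]
    have hth : (a⁻¹ * h * a).trace = (tmat k mu).trace := by
      rw [trace_conj' a h haa']; exact trace_mem_conj hm
    have hdh : (a⁻¹ * h * a).det = 1 := by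
      rw [det_conj' a h haa']; exact det_mem_conj hm
    have htr : (tmat k lam * (a⁻¹ * h * a)).trace = (tmat k nu).trace := by
      rw [← ht', conj_mul a g h haa', trace_conj' a (g * h) haa']
      exact trace_mem_conj hn
    have hcore := core k hk lam mu nu h0l hlk' h0m hmk' hn0 hnk h1
      (by exact_mod_cast h2) (a⁻¹ * x * a) (a⁻¹ * h * a) hdy hyt hyh hth hdh htr
    have hxy : x = a * (a⁻¹ * x * a) * a⁻¹ := by
      simp only [← Matrix.mul_assoc]
      rw [haa', Matrix.one_mul, Matrix.mul_assoc, haa', Matrix.mul_one]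
    rcases hcore with h' | h'
    · left
      rw [hxy, h', Matrix.mul_one, haa']
    · right
      rw [hxy, h', Matrix.mul_neg, Matrix.mul_one, Matrix.neg_mul, haa']
  · have hinv : (-1 : M2)⁻¹ = -1 := Matrix.inv_eq_right_inv (by rw [neg_mul_neg, one_mul])
    have hone : (1 : M2)⁻¹ = 1 := Matrix.inv_eq_right_inv (one_mul 1)
    rintro (rfl | rfl)
    · exact ⟨su2_one, by rw [Matrix.one_mul, hone, Matrix.mul_one],
        by rw [Matrix.one_mul, hone, Matrix.mul_one]⟩
    · refine ⟨su2_neg_one, ?_, ?_⟩ <;>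
      · rw [hinv]; simp
end
end

section
/- Fix a positive integer k and let λ, μ, ν ∈ [0,k] satisfy |λ−μ| ≤ ν ≤ min(λ+μ, 2k−λ−μ), with ν = |λ−μ| or ν = min(λ+μ, 2k−λ−μ), and suppose not all of λ, μ, ν belong to {0, k}. Then for every (g,h) ∈ T_{λ,μ}^ν, the simultaneous centralizer {x ∈ SU(2) : x g x⁻¹ = g and x h x⁻¹ = h} is conjugate in SU(2) to the diagonal maximal torus (the set of diagonal elements of SU(2)). -/
open Matrix Complex Real

noncomputable section

namespace SU2aux

abbrev M2 := Matrix (Fin 2) (Fin 2) ℂ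

lemma det_isUnit {x : M2} (hx : x ∈ SU2) : IsUnit x.det := by
  rw [hx.2]; exact isUnit_one

lemma inv_mul {x : M2} (hx : x ∈ SU2) : x⁻¹ * x = 1 :=
  Matrix.nonsing_inv_mul x (det_isUnit hx)

lemma mul_inv {x : M2} (hx : x ∈ SU2) : x * x⁻¹ = 1 :=
  Matrix.mul_nonsing_inv x (det_isUnit hx)

lemma cl1 {x : M2} (hx : x ∈ SU2) (A : M2) : x⁻¹ * (x * A) = A := by
  rw [← Matrix.mul_assoc, inv_mul hx, Matrix.one_mul]

lemma cl2 {x : M2} (hx : x ∈ SU2) (A : M2) : x * (x⁻¹ * A) = A := by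
  rw [← Matrix.mul_assoc, mul_inv hx, Matrix.one_mul]

lemma mul_mem' {x y : M2} (hx : x ∈ SU2) (hy : y ∈ SU2) : x * y ∈ SU2 :=
  ⟨mul_mem hx.1 hy.1, by rw [Matrix.det_mul, hx.2, hy.2, one_mul]⟩

lemma inv_eq_star {x : M2} (hx : x ∈ SU2) : x⁻¹ = star x :=
  Matrix.inv_eq_right_inv (Matrix.mem_unitaryGroup_iff.1 hx.1)

lemma inv_mem {x : M2} (hx : x ∈ SU2) : x⁻¹ ∈ SU2 := by
  rw [inv_eq_star hx]
  refine ⟨Unitary.star_mem hx.1, ?_⟩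
  rw [Matrix.star_eq_conjTranspose, Matrix.det_conjTranspose, hx.2]
  simp

lemma entries {h : M2} (hh : h ∈ SU2) :
    h 1 1 = (starRingEnd ℂ) (h 0 0) ∧ h 1 0 = -((starRingEnd ℂ) (h 0 1)) ∧
    Complex.normSq (h 0 0) + Complex.normSq (h 0 1) = 1 := by
  have hadj : h⁻¹ = h.adjugate := by
    rw [Matrix.inv_def, hh.2]; simp
  have he : hᴴ = h.adjugate := by
    rw [← Matrix.star_eq_conjTranspose, ← inv_eq_star hh, hadj]
  rw [Matrix.adjugate_fin_two] at he
  have h00 := congrFun (congrFun he 0) 0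
  have h01 := congrFun (congrFun he 1) 0
  simp [Matrix.conjTranspose_apply] at h00 h01
  refine ⟨h00.symm, ?_, ?_⟩
  · have h2 : -((starRingEnd ℂ) (h 1 0)) = h 0 1 := by
      have := congrArg (starRingEnd ℂ) h01
      simpa using this.symm
    rw [← h2]; simp
  · have hu := Matrix.mem_unitaryGroup_iff.1 hh.1
    have := congrFun (congrFun hu 0) 0
    rw [Matrix.mul_apply] at this
    simp [Fin.sum_univ_two, Matrix.star_apply, Matrix.one_apply] at this
    have : h 0 0 * (starRingEnd ℂ) (h 0 0) + h 0 1 * (starRingEnd ℂ) (h 0 1) = 1 := this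
    rw [Complex.mul_conj, Complex.mul_conj] at this
    exact_mod_cast this

lemma trace_conj {x : M2} (hx : x ∈ SU2) (A : M2) : (x * A * x⁻¹).trace = A.trace := by
  rw [Matrix.trace_mul_cycle, inv_mul hx, Matrix.one_mul]

lemma trace_tmat (k : ℕ) (l : ℝ) :
    (tmat k l).trace = ((2 * Real.cos (Real.pi * l / k) : ℝ) : ℂ) := by
  set c : ℝ := Real.pi * l / k with hc
  rw [tmat, Matrix.trace_diagonal]
  rw [Fin.sum_univ_two]
  simp only [Matrix.cons_val_zero, Matrix.cons_val_one, Matrix.head_cons]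
  rw [mul_comm Complex.I ((c : ℝ) : ℂ), ← neg_mul]
  rw [Complex.exp_mul_I, Complex.exp_mul_I]
  push_cast
  ring_nf
  simp [Complex.cos_neg, Complex.sin_neg, Complex.ofReal_cos]
  try ring

lemma diag_of_commute {d : Fin 2 → ℂ} (hd : d 0 ≠ d 1) {u : M2}
    (hc : u * Matrix.diagonal d = Matrix.diagonal d * u) : u 0 1 = 0 ∧ u 1 0 = 0 := by
  have h01 := congrFun (congrFun hc 0) 1
  have h10 := congrFun (congrFun hc 1) 0
  rw [Matrix.mul_apply, Matrix.mul_apply] at h01 h10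
  simp [Fin.sum_univ_two, Matrix.diagonal_apply] at h01 h10
  constructor
  · have h : u 0 1 * (d 1 - d 0) = 0 := by linear_combination h01
    rcases mul_eq_zero.1 h with h | h
    · exact h
    · exact absurd (sub_eq_zero.1 h).symm hd
  · have h : u 1 0 * (d 0 - d 1) = 0 := by linear_combination h10
    rcases mul_eq_zero.1 h with h | h
    · exact h
    · exact absurd (sub_eq_zero.1 h) hd

lemma eq_diagonal {u : M2} (h01 : u 0 1 = 0) (h10 : u 1 0 = 0) :
    u = Matrix.diagonal ![u 0 0, u 1 1] := by
  ext i j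
  fin_cases i <;> fin_cases j <;>
    simp [Matrix.diagonal_apply, h01, h10]

lemma diag_comm (d e : Fin 2 → ℂ) :
    Matrix.diagonal d * Matrix.diagonal e = Matrix.diagonal e * Matrix.diagonal d := by
  rw [Matrix.diagonal_mul_diagonal, Matrix.diagonal_mul_diagonal]
  simp [mul_comm]

lemma conj_fixed_iff {x : M2} (hx : x ∈ SU2) (g : M2) :
    x * g * x⁻¹ = g ↔ x * g = g * x := by
  constructor
  · intro h
    have := congrArg (fun A => A * x) h
    simpa [Matrix.mul_assoc, inv_mul hx] using this
  · intro h
    rw [h, Matrix.mul_assoc, mul_inv hx, Matrix.mul_one]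

lemma conj_conj {y u : M2} (hy : y ∈ SU2) (hu : u ∈ SU2) (D : M2)
    (hcomm : u * D = D * u) :
    (y * u * y⁻¹) * (y * D * y⁻¹) * (y * u * y⁻¹)⁻¹ = y * D * y⁻¹ := by
  have h1 : (y * u * y⁻¹)⁻¹ = y * (u⁻¹ * y⁻¹) := by
    rw [Matrix.mul_inv_rev, Matrix.mul_inv_rev,
      Matrix.nonsing_inv_nonsing_inv y (det_isUnit hy), ← Matrix.mul_assoc]
  rw [h1]
  have key : u * (D * (u⁻¹ * y⁻¹)) = D * y⁻¹ := by
    rw [← Matrix.mul_assoc, hcomm, Matrix.mul_assoc, cl2 hu]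
  calc (y * u * y⁻¹) * (y * D * y⁻¹) * (y * (u⁻¹ * y⁻¹))
      = y * (u * (y⁻¹ * (y * (D * (y⁻¹ * (y * (u⁻¹ * y⁻¹))))))) := by
        simp only [Matrix.mul_assoc]
    _ = y * (u * (D * (u⁻¹ * y⁻¹))) := by rw [cl1 hy, cl1 hy]
    _ = y * (D * y⁻¹) := by rw [key]
    _ = y * D * y⁻¹ := by rw [Matrix.mul_assoc]

lemma centralizer_eq {y g h : M2} (hy : y ∈ SU2) (d1 d2 : Fin 2 → ℂ)
    (hg : g = y * Matrix.diagonal d1 * y⁻¹) (hh : h = y * Matrix.diagonal d2 * y⁻¹)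
    (hd : d1 0 ≠ d1 1 ∨ d2 0 ≠ d2 1) :
    {x : M2 | x ∈ SU2 ∧ x * g * x⁻¹ = g ∧ x * h * x⁻¹ = h} =
      (fun g => y * g * y⁻¹) '' torus := by
  ext z
  simp only [Set.mem_setOf_eq, Set.mem_image]
  constructor
  · rintro ⟨hz, hzg, hzh⟩
    refine ⟨y⁻¹ * z * y, ?_, ?_⟩
    · -- y⁻¹ * z * y ∈ torus
      have humem : y⁻¹ * z * y ∈ SU2 := mul_mem' (mul_mem' (inv_mem hy) hz) hy
      have hcomm : ∀ D : M2, z * (y * D * y⁻¹) = (y * D * y⁻¹) * z →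
          (y⁻¹ * z * y) * D = D * (y⁻¹ * z * y) := by
        intro D hD
        have := congrArg (fun A => y⁻¹ * A * y) hD
        simp only [Matrix.mul_assoc] at this ⊢
        rw [cl1 hy] at this
        calc y⁻¹ * (z * (y * D)) = y⁻¹ * (z * (y * (D * (y⁻¹ * y)))) := by
              rw [inv_mul hy, Matrix.mul_one]
          _ = D * (y⁻¹ * (z * y)) := this
      have hoff : (y⁻¹ * z * y) 0 1 = 0 ∧ (y⁻¹ * z * y) 1 0 = 0 := by
        rcases hd with hd | hd
        · exact diag_of_commute hd (hcomm _ (by rw [← hg]; exact (conj_fixed_iff hz g).1 hzg))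
        · exact diag_of_commute hd (hcomm _ (by rw [← hh]; exact (conj_fixed_iff hz h).1 hzh))
      exact ⟨humem, hoff⟩
    · -- y * (y⁻¹ * z * y) * y⁻¹ = z
      calc y * (y⁻¹ * z * y) * y⁻¹ = y * (y⁻¹ * (z * (y * y⁻¹))) := by
            simp only [Matrix.mul_assoc]
        _ = z := by rw [mul_inv hy, Matrix.mul_one, cl2 hy]
  · rintro ⟨u, ⟨hu, hu01, hu10⟩, rfl⟩
    have hud := eq_diagonal hu01 hu10
    have hcomm1 : u * Matrix.diagonal d1 = Matrix.diagonal d1 * u := by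
      rw [hud]; exact diag_comm _ _
    have hcomm2 : u * Matrix.diagonal d2 = Matrix.diagonal d2 * u := by
      rw [hud]; exact diag_comm _ _
    exact ⟨mul_mem' (mul_mem' hy hu) (inv_mem hy),
      by rw [hg]; exact conj_conj hy hu _ hcomm1,
      by rw [hh]; exact conj_conj hy hu _ hcomm2⟩

lemma expconj1 (c : ℂ) (hc : (starRingEnd ℂ) c = c) :
    Complex.exp (Complex.I * c) * (starRingEnd ℂ) (Complex.exp (Complex.I * c)) = 1 := by
  rw [← Complex.exp_conj, _root_.map_mul, Complex.conj_I, hc, ← Complex.exp_add]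
  ring_nf
  exact Complex.exp_zero

lemma expconj2 (c : ℂ) (hc : (starRingEnd ℂ) c = c) :
    Complex.exp (-(Complex.I * c)) * (starRingEnd ℂ) (Complex.exp (-(Complex.I * c))) = 1 := by
  rw [← Complex.exp_conj, _root_.map_neg, _root_.map_mul, Complex.conj_I, hc, ← Complex.exp_add]
  ring_nf
  exact Complex.exp_zero

lemma tmat_mem (k : ℕ) (l : ℝ) : tmat k l ∈ SU2 := by
  have hprod : Complex.exp (Complex.I * ((Real.pi * l / k : ℝ) : ℂ)) *
      Complex.exp (-(Complex.I * ((Real.pi * l / k : ℝ) : ℂ))) = 1 := by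
    rw [← Complex.exp_add]
    ring_nf
    exact Complex.exp_zero
  constructor
  · rw [Matrix.mem_unitaryGroup_iff, tmat, Matrix.star_eq_conjTranspose,
      Matrix.diagonal_conjTranspose, Matrix.diagonal_mul_diagonal]
    ext i j
    fin_cases i <;> fin_cases j
    · simp only [Matrix.diagonal_apply, Matrix.one_apply, Pi.star_apply, Complex.star_def,
        Matrix.cons_val_zero, Matrix.cons_val_one, Matrix.head_cons, if_true, Fin.isValue]
      refine expconj1 _ ?_
      simp [map_div₀, _root_.map_mul, Complex.conj_ofReal]
    · simp [Matrix.diagonal_apply, Matrix.one_apply]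
    · simp [Matrix.diagonal_apply, Matrix.one_apply]
    · simp only [Matrix.diagonal_apply, Matrix.one_apply, Pi.star_apply, Complex.star_def,
        Matrix.cons_val_zero, Matrix.cons_val_one, Matrix.head_cons, if_true, Fin.isValue]
      refine expconj2 _ ?_
      simp [map_div₀, _root_.map_mul, Complex.conj_ofReal]
  · rw [tmat, Matrix.det_diagonal, Fin.prod_univ_two]
    simpa using hprod

lemma tmat_zero (k : ℕ) : tmat k 0 = 1 := by
  have h0 : (Real.pi * 0 / k : ℝ) = 0 := by simp
  rw [tmat, h0]
  ext i j
  fin_cases i <;> fin_cases j <;> simp [Matrix.diagonal_apply, Matrix.one_apply]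

lemma tmat_k (k : ℕ) (hk : 0 < k) : tmat k k = -1 := by
  have h0 : (Real.pi * k / k : ℝ) = Real.pi := by
    field_simp
  rw [tmat, h0]
  have h1 : Complex.exp (Complex.I * (Real.pi : ℂ)) = -1 := by
    rw [mul_comm]; exact Complex.exp_pi_mul_I
  have h2 : Complex.exp (-(Complex.I * (Real.pi : ℂ))) = -1 := by
    rw [Complex.exp_neg, h1]; norm_num
  rw [h1, h2]
  ext i j
  fin_cases i <;> fin_cases j <;> simp [Matrix.diagonal_apply, Matrix.one_apply]

lemma core (k : ℕ) (hk : 0 < k) {lam mu nu : ℝ} (hlam0 : 0 < lam) (hlamk : lam < (k : ℝ))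
    (hcos : Real.cos (Real.pi * nu / k) =
        Real.cos (Real.pi * lam / k + Real.pi * mu / k) ∨
      Real.cos (Real.pi * nu / k) = Real.cos (Real.pi * lam / k - Real.pi * mu / k))
    {h : M2} (hh : h ∈ SU2)
    (htr1 : h.trace = ((2 * Real.cos (Real.pi * mu / k) : ℝ) : ℂ))
    (htr2 : (tmat k lam * h).trace = ((2 * Real.cos (Real.pi * nu / k) : ℝ) : ℂ)) :
    h 0 1 = 0 ∧ h 1 0 = 0 := by
  obtain ⟨e11, e10, enorm⟩ := entries hh
  set θ : ℝ := Real.pi * lam / k with hθ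
  set φ : ℝ := Real.pi * mu / k with hφ
  set ψ : ℝ := Real.pi * nu / k with hψ
  set a : ℂ := h 0 0 with ha
  have t1 : h.trace = ((2 * a.re : ℝ) : ℂ) := by
    rw [Matrix.trace_fin_two, e11, Complex.add_conj]
  have hre : a.re = Real.cos φ := by
    rw [t1] at htr1
    have := Complex.ofReal_inj.1 htr1
    linarith
  have t2 : (tmat k lam * h).trace =
      ((2 * (Real.cos θ * a.re - Real.sin θ * a.im) : ℝ) : ℂ) := by
    rw [Matrix.trace_fin_two, tmat, Matrix.diagonal_mul, Matrix.diagonal_mul]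
    simp only [Matrix.cons_val_zero, Matrix.cons_val_one, Matrix.head_cons]
    rw [e11, ← ha]
    have hconj : Complex.exp (-(Complex.I * ((θ : ℝ) : ℂ))) * (starRingEnd ℂ) a =
        (starRingEnd ℂ) (Complex.exp (Complex.I * ((θ : ℝ) : ℂ)) * a) := by
      rw [_root_.map_mul, ← Complex.exp_conj]
      congr 2
      simp [Complex.conj_ofReal]
    rw [hconj, Complex.add_conj]
    congr 1
    rw [Complex.mul_re, mul_comm Complex.I, Complex.exp_ofReal_mul_I_re,
      Complex.exp_ofReal_mul_I_im]
    try ring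
  have heq : Real.cos θ * a.re - Real.sin θ * a.im = Real.cos ψ := by
    rw [t2] at htr2
    have := Complex.ofReal_inj.1 htr2
    linarith
  have hθpos : 0 < θ := by
    rw [hθ]; positivity
  have hθlt : θ < Real.pi := by
    rw [hθ, div_lt_iff₀ (by exact_mod_cast hk)]
    have := Real.pi_pos
    nlinarith
  have hsin : Real.sin θ ≠ 0 := ne_of_gt (Real.sin_pos_of_pos_of_lt_pi hθpos hθlt)
  have him : a.im = Real.sin φ ∨ a.im = -Real.sin φ := by
    rcases hcos with hc | hc
    · left
      rw [Real.cos_add] at hc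
      have h3 : Real.sin θ * a.im = Real.sin θ * Real.sin φ := by
        rw [hre] at heq; linarith [heq.trans hc]
      exact mul_left_cancel₀ hsin h3
    · right
      rw [Real.cos_sub] at hc
      have h3 : Real.sin θ * a.im = Real.sin θ * (-Real.sin φ) := by
        rw [hre] at heq; linarith [heq.trans hc]
      exact mul_left_cancel₀ hsin h3
  have hnorm : Complex.normSq a = 1 := by
    rw [Complex.normSq_apply, hre]
    rcases him with h' | h' <;> rw [h'] <;> nlinarith [Real.sin_sq_add_cos_sq φ]
  have hb : Complex.normSq (h 0 1) = 0 := by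
    linarith [enorm, hnorm]
  have hb0 : h 0 1 = 0 := Complex.normSq_eq_zero.1 hb
  exact ⟨hb0, by rw [e10, hb0]; simp⟩

lemma scalar_conj {x : M2} (hx : x ∈ SU2) (c : M2) (hc : c = 1 ∨ c = -1) :
    x * c * x⁻¹ = c := by
  rcases hc with rfl | rfl
  · rw [Matrix.mul_one, mul_inv hx]
  · rw [Matrix.mul_neg, Matrix.mul_one, Matrix.neg_mul, mul_inv hx]

lemma tmat_scalar (k : ℕ) (hk : 0 < k) {l : ℝ} (hl : l = 0 ∨ l = (k : ℝ)) :
    tmat k l = 1 ∨ tmat k l = -1 := by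
  rcases hl with rfl | rfl
  · exact Or.inl (tmat_zero k)
  · exact Or.inr (tmat_k k hk)

lemma tmat_diag_ne (k : ℕ) (hk : 0 < k) {l : ℝ} (h0 : 0 < l) (hlk : l < (k : ℝ)) :
    Complex.exp (Complex.I * ((Real.pi * l / k : ℝ) : ℂ)) ≠
      Complex.exp (-(Complex.I * ((Real.pi * l / k : ℝ) : ℂ))) := by
  have hkR : (0 : ℝ) < (k : ℝ) := by exact_mod_cast hk
  set c : ℝ := Real.pi * l / k with hcdef
  have hc0 : 0 < c := by rw [hcdef]; positivity
  have hcπ : c < Real.pi := by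
    rw [hcdef, div_lt_iff₀ hkR]
    nlinarith [Real.pi_pos]
  intro heq
  have h1 : (Complex.exp (Complex.I * (c : ℂ))).im = Real.sin c := by
    rw [mul_comm, Complex.exp_ofReal_mul_I_im]
  have h2 : (Complex.exp (-(Complex.I * (c : ℂ)))).im = -Real.sin c := by
    rw [show -(Complex.I * (c : ℂ)) = ((-c : ℝ) : ℂ) * Complex.I by push_cast; ring,
      Complex.exp_ofReal_mul_I_im, Real.sin_neg]
  have hs := Real.sin_pos_of_pos_of_lt_pi hc0 hcπ
  rw [heq, h2] at h1
  linarith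

lemma nu_corner (k : ℕ) (hk : 0 < k) {nu : ℝ} (hnu : nu ∈ Set.Icc (0 : ℝ) k)
    (hcos : Real.cos (Real.pi * nu / k) = 1 ∨ Real.cos (Real.pi * nu / k) = -1) :
    nu = 0 ∨ nu = (k : ℝ) := by
  have hkR : (0 : ℝ) < (k : ℝ) := by exact_mod_cast hk
  set ψ : ℝ := Real.pi * nu / k with hψdef
  have hmem : ψ ∈ Set.Icc 0 Real.pi := by
    constructor
    · rw [hψdef]
      exact div_nonneg (mul_nonneg Real.pi_pos.le hnu.1) (le_of_lt hkR)
    · rw [hψdef, div_le_iff₀ hkR]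
      nlinarith [Real.pi_pos, hnu.2]
  have hπmem : Real.pi ∈ Set.Icc (0 : ℝ) Real.pi := ⟨Real.pi_pos.le, le_refl _⟩
  have h0mem : (0 : ℝ) ∈ Set.Icc (0 : ℝ) Real.pi := ⟨le_refl _, Real.pi_pos.le⟩
  rcases hcos with hc | hc
  · left
    have : ψ = 0 := Real.injOn_cos hmem h0mem (by rw [hc, Real.cos_zero])
    rw [hψdef] at this
    have := div_eq_zero_iff.1 this
    rcases this with h | h
    · rcases mul_eq_zero.1 h with h | h
      · exact absurd h (ne_of_gt Real.pi_pos)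
      · exact h
    · exact absurd h (ne_of_gt hkR)
  · right
    have hψπ : ψ = Real.pi := Real.injOn_cos hmem hπmem (by rw [hc, Real.cos_pi])
    rw [hψdef, div_eq_iff (ne_of_gt hkR)] at hψπ
    exact mul_left_cancel₀ (ne_of_gt Real.pi_pos) (by linarith [hψπ] : Real.pi * nu = Real.pi * (k : ℝ))

end SU2aux

open SU2aux

theorem stmt18 (k : ℕ) (hk : 0 < k) (lam mu nu : ℝ)
    (hlam : lam ∈ Set.Icc (0:ℝ) k) (hmu : mu ∈ Set.Icc (0:ℝ) k)
    (hnu : nu ∈ Set.Icc (0:ℝ) k)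
    (h1 : |lam - mu| ≤ nu) (h2 : nu ≤ min (lam + mu) (2 * k - lam - mu))
    (hbdry : nu = |lam - mu| ∨ nu = min (lam + mu) (2 * k - lam - mu))
    (hnotcorner : ¬(lam ∈ ({0, (k:ℝ)} : Set ℝ) ∧ mu ∈ ({0, (k:ℝ)} : Set ℝ) ∧
      nu ∈ ({0, (k:ℝ)} : Set ℝ))) :
    ∀ p ∈ Tset k lam mu nu,
      ∃ y ∈ SU2,
        {x : Matrix (Fin 2) (Fin 2) ℂ |
            x ∈ SU2 ∧ x * p.1 * x⁻¹ = p.1 ∧ x * p.2 * x⁻¹ = p.2} =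
          (fun g => y * g * y⁻¹) '' torus := by
  intro p hp
  obtain ⟨⟨x, hx, hg⟩, ⟨y, hy, hh⟩, ⟨z, hz, hgh⟩⟩ := hp
  have hkR : (0:ℝ) < (k:ℝ) := by exact_mod_cast hk
  have trh : p.2.trace = ((2 * Real.cos (Real.pi * mu / k) : ℝ) : ℂ) := by
    rw [hh, trace_conj hy, trace_tmat]
  have trgh : (p.1 * p.2).trace = ((2 * Real.cos (Real.pi * nu / k) : ℝ) : ℂ) := by
    rw [hgh, trace_conj hz, trace_tmat]
  by_cases hl : lam = 0 ∨ lam = (k:ℝ)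
  · -- λ corner : p.1 is central
    have hscal := tmat_scalar k hk hl
    have hp1 : p.1 = tmat k lam := by rw [hg, scalar_conj hx _ hscal]
    by_cases hm : mu = 0 ∨ mu = (k:ℝ)
    · -- μ corner too: contradiction
      exfalso
      have hscal2 := tmat_scalar k hk hm
      have hp2 : p.2 = tmat k mu := by rw [hh, scalar_conj hy _ hscal2]
      have hcos : Real.cos (Real.pi * nu / k) = 1 ∨ Real.cos (Real.pi * nu / k) = -1 := by
        rw [hp1, hp2] at trgh
        rcases hscal with hs1 | hs1 <;> rcases hscal2 with hs2 | hs2 <;>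
          rw [hs1, hs2] at trgh <;>
          simp only [Matrix.mul_one, Matrix.mul_neg, Matrix.neg_mul, neg_neg,
            Matrix.trace_neg, Matrix.trace_one] at trgh
        · left
          have : (2 * Real.cos (Real.pi * nu / k) : ℝ) = 2 := by exact_mod_cast trgh.symm
          linarith
        · right
          have h2' : ((2 * Real.cos (Real.pi * nu / k) : ℝ) : ℂ) = ((-2 : ℝ) : ℂ) := by
            rw [← trgh]; norm_num
          have : (2 * Real.cos (Real.pi * nu / k) : ℝ) = -2 := by exact_mod_cast h2'
          linarith
        · right
          have h2' : ((2 * Real.cos (Real.pi * nu / k) : ℝ) : ℂ) = ((-2 : ℝ) : ℂ) := by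
            rw [← trgh]; norm_num
          have : (2 * Real.cos (Real.pi * nu / k) : ℝ) = -2 := by exact_mod_cast h2'
          linarith
        · left
          have : (2 * Real.cos (Real.pi * nu / k) : ℝ) = 2 := by exact_mod_cast trgh.symm
          linarith
      have hn := nu_corner k hk hnu hcos
      exact hnotcorner ⟨by simpa [Set.mem_insert_iff] using hl,
        by simpa [Set.mem_insert_iff] using hm,
        by simpa [Set.mem_insert_iff] using hn⟩
    · -- μ interior : conjugate by y
      push_neg at hm
      have hmu0 : 0 < mu := lt_of_le_of_ne hmu.1 (Ne.symm hm.1)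
      have hmuk : mu < (k:ℝ) := lt_of_le_of_ne hmu.2 hm.2
      refine ⟨y, hy, ?_⟩
      have hg' : p.1 = y * tmat k lam * y⁻¹ := by
        rw [hp1, scalar_conj hy _ hscal]
      exact centralizer_eq hy _ _ hg' hh (Or.inr (by
        simpa using tmat_diag_ne k hk hmu0 hmuk))
  · -- λ interior
    push_neg at hl
    have hlam0 : 0 < lam := lt_of_le_of_ne hlam.1 (Ne.symm hl.1)
    have hlamk : lam < (k:ℝ) := lt_of_le_of_ne hlam.2 hl.2
    have hp2mem : p.2 ∈ SU2 := by
      rw [hh]; exact mul_mem' (mul_mem' hy (tmat_mem k mu)) (inv_mem hy)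
    set h' : M2 := x⁻¹ * p.2 * x with hh'def
    have hh'mem : h' ∈ SU2 := mul_mem' (mul_mem' (inv_mem hx) hp2mem) hx
    have htr1 : h'.trace = ((2 * Real.cos (Real.pi * mu / k) : ℝ) : ℂ) := by
      rw [hh'def, Matrix.trace_mul_cycle, mul_inv hx, Matrix.one_mul, trh]
    have hprod : tmat k lam * h' = x⁻¹ * (p.1 * p.2) * x := by
      rw [hh'def, hg]
      calc tmat k lam * (x⁻¹ * p.2 * x)
          = tmat k lam * (x⁻¹ * (p.2 * x)) := by rw [Matrix.mul_assoc]
        _ = x⁻¹ * (x * tmat k lam * x⁻¹ * p.2) * x := by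
            simp only [Matrix.mul_assoc, cl1 hx]
    have htr2 : (tmat k lam * h').trace = ((2 * Real.cos (Real.pi * nu / k) : ℝ) : ℂ) := by
      rw [hprod, Matrix.trace_mul_cycle, mul_inv hx, Matrix.one_mul, trgh]
    have hcos : Real.cos (Real.pi * nu / k) =
        Real.cos (Real.pi * lam / k + Real.pi * mu / k) ∨
        Real.cos (Real.pi * nu / k) = Real.cos (Real.pi * lam / k - Real.pi * mu / k) := by
      rcases hbdry with hb | hb
      · right
        have harg : Real.pi * lam / k - Real.pi * mu / k = Real.pi * (lam - mu) / k := by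
          ring
        have habs : Real.pi * |lam - mu| / (k:ℝ) = |Real.pi * (lam - mu) / (k:ℝ)| := by
          rw [abs_div, abs_mul, _root_.abs_of_nonneg Real.pi_pos.le, _root_.abs_of_nonneg hkR.le]
        rw [hb, habs, Real.cos_abs, harg]
      · rcases le_total (lam + mu) (2 * k - lam - mu) with hmin | hmin
        · left
          have hb' : nu = lam + mu := by rw [hb, min_eq_left hmin]
          rw [hb']
          congr 1
          ring
        · left
          have hb' : nu = 2 * k - lam - mu := by rw [hb, min_eq_right hmin]
          rw [hb']
          have harg : Real.pi * (2 * k - lam - mu) / k =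
              2 * Real.pi - (Real.pi * lam / k + Real.pi * mu / k) := by
            field_simp
            ring
          rw [harg, Real.cos_sub, Real.cos_two_pi, Real.sin_two_pi]
          ring
    obtain ⟨hb01, hb10⟩ := core k hk hlam0 hlamk hcos hh'mem htr1 htr2
    have hdiag := eq_diagonal hb01 hb10
    have hback : x * h' * x⁻¹ = p.2 := by
      calc x * (x⁻¹ * p.2 * x) * x⁻¹
          = x * (x⁻¹ * (p.2 * (x * x⁻¹))) := by simp only [Matrix.mul_assoc]
        _ = p.2 := by rw [mul_inv hx, Matrix.mul_one, cl2 hx]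
    refine ⟨x, hx, ?_⟩
    refine centralizer_eq hx _ (![h' 0 0, h' 1 1]) hg ?_ (Or.inl (by
      simpa using tmat_diag_ne k hk hlam0 hlamk))
    rw [← hdiag]
    exact hback.symm
end
end
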